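/- arXiv:1805.03193 — 5 statements merged into one kernel-verified Lean document; each statement's English description precedes it below -/
import Mathlib

section
/- Let X^n, Y^n, M, W1, W2 be finite-valued random variables such that W1 is independent of W2 and X^n − (M,W1) − (M,W2) − Y^n is a Markov chain. Then I(X^n; Y^n | M) ≤ H(M). In particular, if M takes at most 2^{nR} values, then I(X^n; Y^n | M) ≤ nR. -/
open scoped BigOperators

/-- A probability mass function on a finite sample space. -/
structure FinPMF (Ω : Type*) [Fintype Ω] where
  p : Ω → ℝ
  nonneg : ∀ ω, 0 ≤ p ω
  sum_one : ∑ ω, p ω = 1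

namespace FinPMF

variable {Ω : Type*} [Fintype Ω]

/-- Probability that the random variable `X` takes the value `a`. -/
def pr (μ : FinPMF Ω) {A : Type*} [DecidableEq A] (X : Ω → A) (a : A) : ℝ :=
  ∑ ω, if X ω = a then μ.p ω else 0

/-- Shannon entropy (base 2, i.e. in bits) of the random variable `X`. -/
noncomputable def H (μ : FinPMF Ω) {A : Type*} [Fintype A] [DecidableEq A]
    (X : Ω → A) : ℝ :=
  -∑ a, μ.pr X a * Real.logb 2 (μ.pr X a)

/-- Conditional entropy `H(X|Z)`. -/
noncomputable def CondH (μ : FinPMF Ω) {A C : Type*} [Fintype A] [DecidableEq A]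
    [Fintype C] [DecidableEq C] (X : Ω → A) (Z : Ω → C) : ℝ :=
  μ.H (fun ω => (X ω, Z ω)) - μ.H Z

/-- Mutual information `I(X;Y)`. -/
noncomputable def I2 (μ : FinPMF Ω) {A B : Type*} [Fintype A] [DecidableEq A]
    [Fintype B] [DecidableEq B] (X : Ω → A) (Y : Ω → B) : ℝ :=
  μ.H X + μ.H Y - μ.H (fun ω => (X ω, Y ω))

/-- Conditional mutual information `I(X;Y|Z)`. -/
noncomputable def CI (μ : FinPMF Ω) {A B C : Type*} [Fintype A] [DecidableEq A]
    [Fintype B] [DecidableEq B] [Fintype C] [DecidableEq C]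
    (X : Ω → A) (Y : Ω → B) (Z : Ω → C) : ℝ :=
  μ.H (fun ω => (X ω, Z ω)) + μ.H (fun ω => (Y ω, Z ω))
    - μ.H (fun ω => (X ω, Y ω, Z ω)) - μ.H Z

/-- `X` and `Y` are independent. -/
def Indep (μ : FinPMF Ω) {A B : Type*} [DecidableEq A] [DecidableEq B]
    (X : Ω → A) (Y : Ω → B) : Prop :=
  ∀ a b, μ.pr (fun ω => (X ω, Y ω)) (a, b) = μ.pr X a * μ.pr Y b

/-- `X` and `Y` are conditionally independent given `Z` (Markov chain `X − Z − Y`). -/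
def CondIndep (μ : FinPMF Ω) {A B C : Type*} [DecidableEq A] [DecidableEq B]
    [DecidableEq C] (X : Ω → A) (Y : Ω → B) (Z : Ω → C) : Prop :=
  ∀ a b c, μ.pr (fun ω => (X ω, Y ω, Z ω)) (a, b, c) * μ.pr Z c
    = μ.pr (fun ω => (X ω, Z ω)) (a, c) * μ.pr (fun ω => (Y ω, Z ω)) (b, c)

end FinPMF

/-- Binary entropy function (base 2). -/
noncomputable def binEnt (t : ℝ) : ℝ :=
  -(t * Real.logb 2 t) - (1 - t) * Real.logb 2 (1 - t)


namespace FinPMF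

variable {Ω : Type*} [Fintype Ω]

variable (μ : FinPMF Ω) {A B C : Type*} [DecidableEq A] [DecidableEq B] [DecidableEq C]

lemma pr_nonneg (X : Ω → A) (a : A) : 0 ≤ μ.pr X a := by
  refine Finset.sum_nonneg fun ω _ => ?_
  split <;> simp [μ.nonneg]

lemma sum_pr [Fintype A] (X : Ω → A) : ∑ a, μ.pr X a = 1 := by
  simp only [pr]
  rw [Finset.sum_comm]
  rw [← μ.sum_one]
  refine Finset.sum_congr rfl fun ω _ => ?_
  simpa using Finset.sum_ite_eq Finset.univ (X ω) (fun _ => μ.p ω)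

lemma pr_comp_inj (f : A → B) (hf : Function.Injective f) (X : Ω → A) (a : A) :
    μ.pr (fun ω => f (X ω)) (f a) = μ.pr X a := by
  refine Finset.sum_congr rfl fun ω _ => ?_
  simp [hf.eq_iff]

lemma pr_le_pr_comp (f : A → B) (X : Ω → A) (a : A) :
    μ.pr X a ≤ μ.pr (fun ω => f (X ω)) (f a) := by
  refine Finset.sum_le_sum fun ω _ => ?_
  by_cases h : X ω = a
  · simp [h]
  · simp only [if_neg h]
    split <;> simp [μ.nonneg]

lemma pr_pair_marg [Fintype B] (X : Ω → A) (Y : Ω → B) (a : A) :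
    μ.pr X a = ∑ b, μ.pr (fun ω => (X ω, Y ω)) (a, b) := by
  simp only [pr]
  conv_rhs => rw [Finset.sum_comm]
  refine Finset.sum_congr rfl fun ω _ => ?_
  by_cases h : X ω = a <;>
    simp [h, Prod.ext_iff, Finset.sum_ite_eq]

lemma H_eq_of_inj [Fintype A] [Fintype B] (f : A → B) (hf : Function.Injective f)
    (X : Ω → A) : μ.H (fun ω => f (X ω)) = μ.H X := by
  rw [H, H, neg_inj]
  have h0 : ∀ b ∈ Finset.univ, b ∉ Finset.image f Finset.univ →
      μ.pr (fun ω => f (X ω)) b * Real.logb 2 (μ.pr (fun ω => f (X ω)) b) = 0 := by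
    intro b _ hb
    have : μ.pr (fun ω => f (X ω)) b = 0 := by
      refine Finset.sum_eq_zero fun ω _ => ?_
      have hne : f (X ω) ≠ b := fun h =>
        hb (h ▸ Finset.mem_image_of_mem f (Finset.mem_univ (X ω)))
      simp [hne]
    simp [this]
  calc ∑ b, μ.pr (fun ω => f (X ω)) b * Real.logb 2 (μ.pr (fun ω => f (X ω)) b)
      = ∑ b ∈ Finset.image f Finset.univ,
          μ.pr (fun ω => f (X ω)) b * Real.logb 2 (μ.pr (fun ω => f (X ω)) b) :=
        (Finset.sum_subset (Finset.subset_univ _) h0).symm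
    _ = ∑ a, μ.pr (fun ω => f (X ω)) (f a) * Real.logb 2 (μ.pr (fun ω => f (X ω)) (f a)) :=
        Finset.sum_image (fun a _ b _ h => hf h)
    _ = ∑ a, μ.pr X a * Real.logb 2 (μ.pr X a) := by
        refine Finset.sum_congr rfl fun a _ => ?_
        rw [μ.pr_comp_inj f hf]

end FinPMF

lemma gibbs {ι : Type*} [Fintype ι] (p q : ι → ℝ) (hp : ∀ i, 0 ≤ p i) (hq : ∀ i, 0 ≤ q i)
    (hp1 : ∑ i, p i = 1) (hq1 : ∑ i, q i ≤ 1) (hsupp : ∀ i, q i = 0 → p i = 0) :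
    ∑ i, p i * (Real.logb 2 (q i) - Real.logb 2 (p i)) ≤ 0 := by
  have hlog2 : (0:ℝ) < Real.log 2 := Real.log_pos (by norm_num)
  have key : ∀ i, p i * (Real.logb 2 (q i) - Real.logb 2 (p i)) ≤ (q i - p i) / Real.log 2 := by
    intro i
    rcases eq_or_lt_of_le (hp i) with h0 | h0
    · rw [← h0]
      simp only [zero_mul]
      have := hq i
      apply div_nonneg (by linarith) hlog2.le
    · have hqi : 0 < q i := lt_of_le_of_ne (hq i) fun h => by
        have := hsupp i h.symm; linarith
      have : Real.logb 2 (q i) - Real.logb 2 (p i) = Real.log (q i / p i) / Real.log 2 := by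
        rw [Real.logb, Real.logb, Real.log_div (ne_of_gt hqi) (ne_of_gt h0)]
        ring
      rw [this]
      have hle : Real.log (q i / p i) ≤ q i / p i - 1 :=
        Real.log_le_sub_one_of_pos (by positivity)
      rw [mul_div_assoc' , div_le_div_iff_of_pos_right hlog2]
      calc p i * Real.log (q i / p i) ≤ p i * (q i / p i - 1) := by
            exact mul_le_mul_of_nonneg_left hle (le_of_lt h0)
        _ = q i - p i := by field_simp
  calc ∑ i, p i * (Real.logb 2 (q i) - Real.logb 2 (p i))
      ≤ ∑ i, (q i - p i) / Real.log 2 := Finset.sum_le_sum fun i _ => key i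
    _ = (∑ i, q i - ∑ i, p i) / Real.log 2 := by
        rw [← Finset.sum_div, Finset.sum_sub_distrib]
    _ ≤ 0 := by
        apply div_nonpos_of_nonpos_of_nonneg
        · linarith
        · linarith

namespace FinPMF

variable {Ω : Type*} [Fintype Ω] (μ : FinPMF Ω)
variable {A B C : Type*} [DecidableEq A] [DecidableEq B] [DecidableEq C]

lemma pr3_margY [Fintype B] (X : Ω → A) (Y : Ω → B) (Z : Ω → C) (a : A) (c : C) :
    μ.pr (fun ω => (X ω, Z ω)) (a, c)
      = ∑ b, μ.pr (fun ω => (X ω, Y ω, Z ω)) (a, b, c) := by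
  simp only [pr]
  conv_rhs => rw [Finset.sum_comm]
  refine Finset.sum_congr rfl fun ω _ => ?_
  by_cases h1 : X ω = a <;> by_cases h2 : Z ω = c <;>
    simp [h1, h2, Prod.ext_iff, Finset.sum_ite_eq]

lemma pr3_margX [Fintype A] (X : Ω → A) (Y : Ω → B) (Z : Ω → C) (b : B) (c : C) :
    μ.pr (fun ω => (Y ω, Z ω)) (b, c)
      = ∑ a, μ.pr (fun ω => (X ω, Y ω, Z ω)) (a, b, c) := by
  simp only [pr]
  conv_rhs => rw [Finset.sum_comm]
  refine Finset.sum_congr rfl fun ω _ => ?_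
  by_cases h1 : Y ω = b <;> by_cases h2 : Z ω = c <;>
    simp [h1, h2, Prod.ext_iff, Finset.sum_ite_eq]

lemma pr3_margXY [Fintype A] [Fintype B] (X : Ω → A) (Y : Ω → B) (Z : Ω → C) (c : C) :
    μ.pr Z c = ∑ a, ∑ b, μ.pr (fun ω => (X ω, Y ω, Z ω)) (a, b, c) := by
  simp only [pr]
  symm
  calc ∑ a, ∑ b, ∑ ω, (if (X ω, Y ω, Z ω) = (a, b, c) then μ.p ω else 0)
      = ∑ a, ∑ ω, ∑ b, (if (X ω, Y ω, Z ω) = (a, b, c) then μ.p ω else 0) :=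
        Finset.sum_congr rfl fun a _ => Finset.sum_comm
    _ = ∑ ω, ∑ a, ∑ b, (if (X ω, Y ω, Z ω) = (a, b, c) then μ.p ω else 0) :=
        Finset.sum_comm
    _ = ∑ ω, (if Z ω = c then μ.p ω else 0) := by
        refine Finset.sum_congr rfl fun ω _ => ?_
        by_cases h2 : Z ω = c <;>
          simp [h2, Prod.ext_iff, ite_and, Finset.sum_ite_eq]

variable [Fintype A] [Fintype B] [Fintype C]

lemma CMI_repr (X : Ω → A) (Y : Ω → B) (Z : Ω → C) :
    μ.H (fun ω => (X ω, Z ω)) + μ.H (fun ω => (Y ω, Z ω))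
      - μ.H (fun ω => (X ω, Y ω, Z ω)) - μ.H Z
    = ∑ a, ∑ b, ∑ c, μ.pr (fun ω => (X ω, Y ω, Z ω)) (a, b, c) *
        (Real.logb 2 (μ.pr (fun ω => (X ω, Y ω, Z ω)) (a, b, c))
          + Real.logb 2 (μ.pr Z c)
          - Real.logb 2 (μ.pr (fun ω => (X ω, Z ω)) (a, c))
          - Real.logb 2 (μ.pr (fun ω => (Y ω, Z ω)) (b, c))) := by
  have e3 : μ.H (fun ω => (X ω, Y ω, Z ω))
      = -∑ a, ∑ b, ∑ c, μ.pr (fun ω => (X ω, Y ω, Z ω)) (a, b, c) *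
          Real.logb 2 (μ.pr (fun ω => (X ω, Y ω, Z ω)) (a, b, c)) := by
    rw [H]
    simp only [Fintype.sum_prod_type]
  have eZ : μ.H Z
      = -∑ a, ∑ b, ∑ c, μ.pr (fun ω => (X ω, Y ω, Z ω)) (a, b, c) *
          Real.logb 2 (μ.pr Z c) := by
    rw [H, neg_inj]
    calc ∑ c, μ.pr Z c * Real.logb 2 (μ.pr Z c)
        = ∑ c, ∑ a, ∑ b, μ.pr (fun ω => (X ω, Y ω, Z ω)) (a, b, c) *
            Real.logb 2 (μ.pr Z c) := by
          refine Finset.sum_congr rfl fun c _ => ?_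
          nth_rewrite 1 [μ.pr3_margXY X Y Z c]
          rw [Finset.sum_mul]
          exact Finset.sum_congr rfl fun a _ => Finset.sum_mul ..
      _ = ∑ a, ∑ b, ∑ c, μ.pr (fun ω => (X ω, Y ω, Z ω)) (a, b, c) *
            Real.logb 2 (μ.pr Z c) := by
          rw [Finset.sum_comm]
          exact Finset.sum_congr rfl fun a _ => Finset.sum_comm ..
  have eXZ : μ.H (fun ω => (X ω, Z ω))
      = -∑ a, ∑ b, ∑ c, μ.pr (fun ω => (X ω, Y ω, Z ω)) (a, b, c) *
          Real.logb 2 (μ.pr (fun ω => (X ω, Z ω)) (a, c)) := by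
    rw [H, neg_inj]
    simp only [Fintype.sum_prod_type]
    refine Finset.sum_congr rfl fun a _ => ?_
    calc ∑ c, μ.pr (fun ω => (X ω, Z ω)) (a, c) * Real.logb 2 (μ.pr (fun ω => (X ω, Z ω)) (a, c))
        = ∑ c, ∑ b, μ.pr (fun ω => (X ω, Y ω, Z ω)) (a, b, c) *
            Real.logb 2 (μ.pr (fun ω => (X ω, Z ω)) (a, c)) := by
          refine Finset.sum_congr rfl fun c _ => ?_
          nth_rewrite 1 [μ.pr3_margY X Y Z a c]
          rw [Finset.sum_mul]
      _ = ∑ b, ∑ c, μ.pr (fun ω => (X ω, Y ω, Z ω)) (a, b, c) *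
            Real.logb 2 (μ.pr (fun ω => (X ω, Z ω)) (a, c)) := Finset.sum_comm ..
  have eYZ : μ.H (fun ω => (Y ω, Z ω))
      = -∑ a, ∑ b, ∑ c, μ.pr (fun ω => (X ω, Y ω, Z ω)) (a, b, c) *
          Real.logb 2 (μ.pr (fun ω => (Y ω, Z ω)) (b, c)) := by
    rw [H, neg_inj]
    simp only [Fintype.sum_prod_type]
    calc ∑ b, ∑ c, μ.pr (fun ω => (Y ω, Z ω)) (b, c) * Real.logb 2 (μ.pr (fun ω => (Y ω, Z ω)) (b, c))
        = ∑ b, ∑ c, ∑ a, μ.pr (fun ω => (X ω, Y ω, Z ω)) (a, b, c) *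
            Real.logb 2 (μ.pr (fun ω => (Y ω, Z ω)) (b, c)) := by
          refine Finset.sum_congr rfl fun b _ => Finset.sum_congr rfl fun c _ => ?_
          nth_rewrite 1 [μ.pr3_margX X Y Z b c]
          rw [Finset.sum_mul]
      _ = ∑ b, ∑ a, ∑ c, μ.pr (fun ω => (X ω, Y ω, Z ω)) (a, b, c) *
            Real.logb 2 (μ.pr (fun ω => (Y ω, Z ω)) (b, c)) :=
          Finset.sum_congr rfl fun b _ => Finset.sum_comm ..
      _ = ∑ a, ∑ b, ∑ c, μ.pr (fun ω => (X ω, Y ω, Z ω)) (a, b, c) *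
            Real.logb 2 (μ.pr (fun ω => (Y ω, Z ω)) (b, c)) := Finset.sum_comm ..
  rw [e3, eZ, eXZ, eYZ]
  simp only [mul_add, mul_sub, Finset.sum_add_distrib, Finset.sum_sub_distrib]
  ring

lemma CMI_nonneg (X : Ω → A) (Y : Ω → B) (Z : Ω → C) :
    μ.H (fun ω => (X ω, Y ω, Z ω)) + μ.H Z
      ≤ μ.H (fun ω => (X ω, Z ω)) + μ.H (fun ω => (Y ω, Z ω)) := by
  have repr := μ.CMI_repr X Y Z
  set p3 := μ.pr (fun ω => (X ω, Y ω, Z ω)) with hp3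
  have hdomXZ : ∀ a b c, p3 (a, b, c) ≤ μ.pr (fun ω => (X ω, Z ω)) (a, c) := by
    intro a b c
    rw [μ.pr3_margY X Y Z a c]
    exact Finset.single_le_sum
      (f := fun b => μ.pr (fun ω => (X ω, Y ω, Z ω)) (a, b, c))
      (fun b _ => μ.pr_nonneg _ _) (Finset.mem_univ b)
  have hdomYZ : ∀ a b c, p3 (a, b, c) ≤ μ.pr (fun ω => (Y ω, Z ω)) (b, c) := by
    intro a b c
    rw [μ.pr3_margX X Y Z b c]
    exact Finset.single_le_sum
      (f := fun a => μ.pr (fun ω => (X ω, Y ω, Z ω)) (a, b, c))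
      (fun a _ => μ.pr_nonneg _ _) (Finset.mem_univ a)
  have hdomZ : ∀ a b c, p3 (a, b, c) ≤ μ.pr Z c := by
    intro a b c
    rw [μ.pr3_margXY X Y Z c]
    calc p3 (a, b, c) ≤ ∑ b, p3 (a, b, c) :=
          Finset.single_le_sum (f := fun b => p3 (a, b, c))
            (fun b _ => μ.pr_nonneg _ _) (Finset.mem_univ b)
      _ ≤ ∑ a, ∑ b, p3 (a, b, c) :=
          Finset.single_le_sum (f := fun a => ∑ b, p3 (a, b, c))
            (fun a _ => Finset.sum_nonneg fun b _ => μ.pr_nonneg _ _)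
            (Finset.mem_univ a)
  set q : A × B × C → ℝ := fun t =>
    if μ.pr Z t.2.2 = 0 then 0
    else μ.pr (fun ω => (X ω, Z ω)) (t.1, t.2.2) * μ.pr (fun ω => (Y ω, Z ω)) (t.2.1, t.2.2)
      / μ.pr Z t.2.2 with hq
  have hqnn : ∀ t, 0 ≤ q t := by
    intro t
    rw [hq]
    dsimp only
    split
    · exact le_rfl
    · exact div_nonneg (mul_nonneg (μ.pr_nonneg _ _) (μ.pr_nonneg _ _)) (μ.pr_nonneg _ _)
  have hsum_q : ∑ t, q t ≤ 1 := by
    have hstep : ∀ c, (∑ a, ∑ b, q (a, b, c)) ≤ μ.pr Z c := by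
      intro c
      by_cases hz : μ.pr Z c = 0
      · simp [hq, hz, μ.pr_nonneg]
      · have : ∑ a, ∑ b, q (a, b, c)
            = (∑ a, μ.pr (fun ω => (X ω, Z ω)) (a, c))
              * (∑ b, μ.pr (fun ω => (Y ω, Z ω)) (b, c)) / μ.pr Z c := by
          simp only [hq, if_neg hz]
          rw [Finset.sum_mul, Finset.sum_div]
          refine Finset.sum_congr rfl fun a _ => ?_
          rw [Finset.mul_sum, Finset.sum_div]
        rw [this]
        have h1 : ∑ a, μ.pr (fun ω => (X ω, Z ω)) (a, c) = μ.pr Z c := by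
          rw [μ.pr3_margXY X Y Z c]
          exact Finset.sum_congr rfl fun a _ => μ.pr3_margY X Y Z a c
        have h2 : ∑ b, μ.pr (fun ω => (Y ω, Z ω)) (b, c) = μ.pr Z c := by
          rw [μ.pr3_margXY X Y Z c, Finset.sum_comm]
          exact Finset.sum_congr rfl fun b _ => μ.pr3_margX X Y Z b c
        rw [h1, h2]
        rw [mul_div_assoc, div_self hz, mul_one]
    calc ∑ t, q t = ∑ a, ∑ b, ∑ c, q (a, b, c) := by simp [Fintype.sum_prod_type]
      _ = ∑ a, ∑ c, ∑ b, q (a, b, c) :=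
          Finset.sum_congr rfl fun a _ => Finset.sum_comm
      _ = ∑ c, ∑ a, ∑ b, q (a, b, c) := Finset.sum_comm
      _ ≤ ∑ c, μ.pr Z c := Finset.sum_le_sum fun c _ => hstep c
      _ = 1 := μ.sum_pr Z
  have hsupp : ∀ t, q t = 0 → p3 t = 0 := by
    rintro ⟨a, b, c⟩ ht
    rw [hq] at ht
    dsimp only at ht
    split at ht
    · rename_i hz
      exact le_antisymm (hz ▸ hdomZ a b c) (μ.pr_nonneg _ _)
    · rename_i hz
      rcases mul_eq_zero.1 ((div_eq_zero_iff.1 ht).resolve_right hz) with h | h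
      · exact le_antisymm (h ▸ hdomXZ a b c) (μ.pr_nonneg _ _)
      · exact le_antisymm (h ▸ hdomYZ a b c) (μ.pr_nonneg _ _)
  have hg := gibbs p3 q (fun t => μ.pr_nonneg _ _) hqnn (μ.sum_pr _) hsum_q hsupp
  have hconv : ∑ t, p3 t * (Real.logb 2 (q t) - Real.logb 2 (p3 t))
      = -(∑ a, ∑ b, ∑ c, p3 (a, b, c) *
        (Real.logb 2 (p3 (a, b, c)) + Real.logb 2 (μ.pr Z c)
          - Real.logb 2 (μ.pr (fun ω => (X ω, Z ω)) (a, c))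
          - Real.logb 2 (μ.pr (fun ω => (Y ω, Z ω)) (b, c)))) := by
    calc ∑ t, p3 t * (Real.logb 2 (q t) - Real.logb 2 (p3 t))
        = ∑ a, ∑ b, ∑ c, p3 (a, b, c) *
            (Real.logb 2 (q (a, b, c)) - Real.logb 2 (p3 (a, b, c))) := by
          simp [Fintype.sum_prod_type]
      _ = ∑ a, ∑ b, ∑ c, -(p3 (a, b, c) *
            (Real.logb 2 (p3 (a, b, c)) + Real.logb 2 (μ.pr Z c)
              - Real.logb 2 (μ.pr (fun ω => (X ω, Z ω)) (a, c))
              - Real.logb 2 (μ.pr (fun ω => (Y ω, Z ω)) (b, c)))) := ?_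
      _ = -(∑ a, ∑ b, ∑ c, p3 (a, b, c) *
            (Real.logb 2 (p3 (a, b, c)) + Real.logb 2 (μ.pr Z c)
              - Real.logb 2 (μ.pr (fun ω => (X ω, Z ω)) (a, c))
              - Real.logb 2 (μ.pr (fun ω => (Y ω, Z ω)) (b, c)))) := by
          simp [Finset.sum_neg_distrib]
    refine Finset.sum_congr rfl fun a _ => Finset.sum_congr rfl fun b _ =>
      Finset.sum_congr rfl fun c _ => ?_
    rcases eq_or_lt_of_le (μ.pr_nonneg (fun ω => (X ω, Y ω, Z ω)) (a, b, c)) with h0 | h0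
    · rw [← hp3] at h0
      rw [← h0]
      ring
    · rw [← hp3] at h0
      have hZpos : 0 < μ.pr Z c := lt_of_lt_of_le h0 (hdomZ a b c)
      have hXZpos : 0 < μ.pr (fun ω => (X ω, Z ω)) (a, c) := lt_of_lt_of_le h0 (hdomXZ a b c)
      have hYZpos : 0 < μ.pr (fun ω => (Y ω, Z ω)) (b, c) := lt_of_lt_of_le h0 (hdomYZ a b c)
      have : q (a, b, c) = μ.pr (fun ω => (X ω, Z ω)) (a, c)
          * μ.pr (fun ω => (Y ω, Z ω)) (b, c) / μ.pr Z c := by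
        rw [hq]
        exact if_neg (ne_of_gt hZpos)
      rw [this, Real.logb_div (by positivity) (ne_of_gt hZpos),
        Real.logb_mul (ne_of_gt hXZpos) (ne_of_gt hYZpos)]
      ring
  rw [hconv] at hg
  linarith

lemma CMI_eq_zero (X : Ω → A) (Y : Ω → B) (Z : Ω → C)
    (h : ∀ a b c, μ.pr (fun ω => (X ω, Y ω, Z ω)) (a, b, c) * μ.pr Z c
      = μ.pr (fun ω => (X ω, Z ω)) (a, c) * μ.pr (fun ω => (Y ω, Z ω)) (b, c)) :
    μ.H (fun ω => (X ω, Z ω)) + μ.H (fun ω => (Y ω, Z ω))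
      = μ.H (fun ω => (X ω, Y ω, Z ω)) + μ.H Z := by
  have repr := μ.CMI_repr X Y Z
  have hz : (∑ a, ∑ b, ∑ c, μ.pr (fun ω => (X ω, Y ω, Z ω)) (a, b, c) *
        (Real.logb 2 (μ.pr (fun ω => (X ω, Y ω, Z ω)) (a, b, c))
          + Real.logb 2 (μ.pr Z c)
          - Real.logb 2 (μ.pr (fun ω => (X ω, Z ω)) (a, c))
          - Real.logb 2 (μ.pr (fun ω => (Y ω, Z ω)) (b, c)))) = 0 := by
    refine Finset.sum_eq_zero fun a _ => Finset.sum_eq_zero fun b _ =>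
      Finset.sum_eq_zero fun c _ => ?_
    rcases eq_or_lt_of_le (μ.pr_nonneg (fun ω => (X ω, Y ω, Z ω)) (a, b, c)) with h0 | h0
    · rw [← h0]; ring
    · have hdomXZ : μ.pr (fun ω => (X ω, Y ω, Z ω)) (a,b,c) ≤ μ.pr (fun ω => (X ω, Z ω)) (a, c) := by
        rw [μ.pr3_margY X Y Z a c]
        exact Finset.single_le_sum
          (f := fun b => μ.pr (fun ω => (X ω, Y ω, Z ω)) (a, b, c))
          (fun b _ => μ.pr_nonneg _ _) (Finset.mem_univ b)
      have hdomZ : μ.pr (fun ω => (X ω, Y ω, Z ω)) (a,b,c) ≤ μ.pr Z c := by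
        rw [μ.pr3_margXY X Y Z c]
        calc μ.pr (fun ω => (X ω, Y ω, Z ω)) (a,b,c)
            ≤ ∑ b, μ.pr (fun ω => (X ω, Y ω, Z ω)) (a, b, c) :=
              Finset.single_le_sum
                (f := fun b => μ.pr (fun ω => (X ω, Y ω, Z ω)) (a, b, c))
                (fun b _ => μ.pr_nonneg _ _) (Finset.mem_univ b)
          _ ≤ ∑ a, ∑ b, μ.pr (fun ω => (X ω, Y ω, Z ω)) (a, b, c) :=
              Finset.single_le_sum
                (f := fun a => ∑ b, μ.pr (fun ω => (X ω, Y ω, Z ω)) (a, b, c))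
                (fun a _ => Finset.sum_nonneg fun b _ => μ.pr_nonneg _ _)
                (Finset.mem_univ a)
      have hZpos : 0 < μ.pr Z c := lt_of_lt_of_le h0 hdomZ
      have hXZpos : 0 < μ.pr (fun ω => (X ω, Z ω)) (a, c) := lt_of_lt_of_le h0 hdomXZ
      have hYZpos : 0 < μ.pr (fun ω => (Y ω, Z ω)) (b, c) := by
        have := h a b c
        nlinarith [μ.pr_nonneg (fun ω => (Y ω, Z ω)) (b, c)]
      have : Real.logb 2 (μ.pr (fun ω => (X ω, Y ω, Z ω)) (a, b, c)) + Real.logb 2 (μ.pr Z c)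
          = Real.logb 2 (μ.pr (fun ω => (X ω, Z ω)) (a, c))
            + Real.logb 2 (μ.pr (fun ω => (Y ω, Z ω)) (b, c)) := by
        rw [← Real.logb_mul (ne_of_gt h0) (ne_of_gt hZpos),
          ← Real.logb_mul (ne_of_gt hXZpos) (ne_of_gt hYZpos), h a b c]
      rw [this]
      ring
  rw [hz] at repr
  linarith

end FinPMF

namespace FinPMF

variable {Ω : Type*} [Fintype Ω] (μ : FinPMF Ω)
variable {A B C : Type*} [DecidableEq A] [DecidableEq B] [DecidableEq C]
variable [Fintype A] [Fintype B] [Fintype C]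

lemma pr_unit : μ.pr (fun _ : Ω => ()) () = 1 := by
  simpa [pr] using μ.sum_one

lemma H_unit : μ.H (fun _ : Ω => ()) = 0 := by
  rw [H]
  rw [show (∑ a : Unit, μ.pr (fun _ : Ω => ()) a * Real.logb 2 (μ.pr (fun _ : Ω => ()) a))
      = μ.pr (fun _ : Ω => ()) () * Real.logb 2 (μ.pr (fun _ : Ω => ()) ()) from by simp]
  rw [μ.pr_unit]
  simp

lemma H_pair_unit (X : Ω → A) (Y : Ω → B) :
    μ.H (fun ω => (X ω, Y ω, ())) = μ.H (fun ω => (X ω, Y ω)) :=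
  μ.H_eq_of_inj (fun t : A × B => (t.1, t.2, ()))
    (fun u v h => by simpa [Prod.ext_iff] using h) (fun ω => (X ω, Y ω))

lemma H_unit_right (X : Ω → A) :
    μ.H (fun ω => (X ω, ())) = μ.H X :=
  μ.H_eq_of_inj (fun a : A => (a, ()))
    (fun u v h => by simpa [Prod.ext_iff] using h) X

lemma H_pair_le (X : Ω → A) (Y : Ω → B) :
    μ.H (fun ω => (X ω, Y ω)) ≤ μ.H X + μ.H Y := by
  have h := μ.CMI_nonneg X Y (fun _ => ())
  rw [μ.H_pair_unit X Y, μ.H_unit, μ.H_unit_right X, μ.H_unit_right Y] at h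
  linarith

lemma H_pair_eq_of_indep (X : Ω → A) (Y : Ω → B)
    (h : ∀ a b, μ.pr (fun ω => (X ω, Y ω)) (a, b) = μ.pr X a * μ.pr Y b) :
    μ.H (fun ω => (X ω, Y ω)) = μ.H X + μ.H Y := by
  have hz : ∀ (a : A) (b : B) (c : Unit),
      μ.pr (fun ω => (X ω, Y ω, ())) (a, b, c) * μ.pr (fun _ : Ω => ()) c
        = μ.pr (fun ω => (X ω, ())) (a, c) * μ.pr (fun ω => (Y ω, ())) (b, c) := by
    rintro a b ⟨⟩
    have e1 : μ.pr (fun ω => (X ω, Y ω, ())) (a, b, ())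
        = μ.pr (fun ω => (X ω, Y ω)) (a, b) :=
      μ.pr_comp_inj (fun t : A × B => (t.1, t.2, ()))
        (fun u v h => by simpa [Prod.ext_iff] using h) (fun ω => (X ω, Y ω)) (a, b)
    have e2 : μ.pr (fun ω => (X ω, ())) (a, ()) = μ.pr X a :=
      μ.pr_comp_inj (fun a : A => (a, ()))
        (fun u v h => by simpa [Prod.ext_iff] using h) X a
    have e3 : μ.pr (fun ω => (Y ω, ())) (b, ()) = μ.pr Y b :=
      μ.pr_comp_inj (fun b : B => (b, ()))
        (fun u v h => by simpa [Prod.ext_iff] using h) Y b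
    rw [e1, e2, e3, μ.pr_unit, mul_one, h a b]
  have := μ.CMI_eq_zero X Y (fun _ => ()) hz
  rw [μ.H_pair_unit X Y, μ.H_unit, μ.H_unit_right X, μ.H_unit_right Y] at this
  linarith

lemma H_fst_le (X : Ω → A) (Z : Ω → C) :
    μ.H X ≤ μ.H (fun ω => (X ω, Z ω)) := by
  rw [H, H, Fintype.sum_prod_type, neg_le_neg_iff]
  have step : ∀ a, ∑ c, μ.pr (fun ω => (X ω, Z ω)) (a, c) *
      Real.logb 2 (μ.pr (fun ω => (X ω, Z ω)) (a, c))
      ≤ μ.pr X a * Real.logb 2 (μ.pr X a) := by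
    intro a
    have hdom : ∀ c, μ.pr (fun ω => (X ω, Z ω)) (a, c) ≤ μ.pr X a := by
      intro c
      rw [μ.pr_pair_marg X Z a]
      exact Finset.single_le_sum
        (f := fun c => μ.pr (fun ω => (X ω, Z ω)) (a, c))
        (fun c _ => μ.pr_nonneg _ _) (Finset.mem_univ c)
    calc ∑ c, μ.pr (fun ω => (X ω, Z ω)) (a, c) *
          Real.logb 2 (μ.pr (fun ω => (X ω, Z ω)) (a, c))
        ≤ ∑ c, μ.pr (fun ω => (X ω, Z ω)) (a, c) * Real.logb 2 (μ.pr X a) := by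
          refine Finset.sum_le_sum fun c _ => ?_
          rcases eq_or_lt_of_le (μ.pr_nonneg (fun ω => (X ω, Z ω)) (a, c)) with h0 | h0
          · rw [← h0]; simp
          · refine mul_le_mul_of_nonneg_left ?_ (le_of_lt h0)
            exact (Real.logb_le_logb (by norm_num) h0 (lt_of_lt_of_le h0 (hdom c))).2 (hdom c)
      _ = μ.pr X a * Real.logb 2 (μ.pr X a) := by
          rw [← Finset.sum_mul, ← μ.pr_pair_marg X Z a]
  exact Finset.sum_le_sum fun a _ => step a

lemma H_le_log_card [Nonempty A] (X : Ω → A) :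
    μ.H X ≤ Real.logb 2 (Fintype.card A) := by
  have hcard : (0:ℝ) < Fintype.card A := by
    exact_mod_cast Fintype.card_pos
  have hg := gibbs (μ.pr X) (fun _ => (Fintype.card A : ℝ)⁻¹)
    (fun a => μ.pr_nonneg _ _) (fun a => by positivity)
    (μ.sum_pr X)
    (by
      rw [Finset.sum_const]
      simp only [nsmul_eq_mul, Finset.card_univ]
      rw [mul_inv_cancel₀ (ne_of_gt hcard)])
    (fun a h => absurd h (by positivity))
  have e : ∑ a, μ.pr X a * (Real.logb 2 (Fintype.card A : ℝ)⁻¹ - Real.logb 2 (μ.pr X a))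
      = -Real.logb 2 (Fintype.card A) - (-μ.H X) := by
    simp only [Real.logb_inv, mul_sub, Finset.sum_sub_distrib]
    rw [← Finset.sum_mul, μ.sum_pr X, H]
    ring
  rw [e] at hg
  linarith

end FinPMF

theorem stmt2' {Ω 𝒳 𝒴 𝓜 𝒲₁ 𝒲₂ : Type*} [Fintype Ω]
    [Fintype 𝒳] [DecidableEq 𝒳] [Fintype 𝒴] [DecidableEq 𝒴]
    [Fintype 𝓜] [DecidableEq 𝓜]
    [Fintype 𝒲₁] [DecidableEq 𝒲₁] [Fintype 𝒲₂] [DecidableEq 𝒲₂]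
    {n : ℕ}
    (μ : FinPMF Ω) (Xn : Ω → Fin n → 𝒳) (Yn : Ω → Fin n → 𝒴) (M : Ω → 𝓜)
    (W1 : Ω → 𝒲₁) (W2 : Ω → 𝒲₂)
    (hInd : ∀ a b, μ.pr (fun ω => (W1 ω, W2 ω)) (a, b) = μ.pr W1 a * μ.pr W2 b)
    (hMarkov : ∀ (x : Fin n → 𝒳) (y : Fin n → 𝒴) (m : 𝓜) (w1 : 𝒲₁) (w2 : 𝒲₂),
      μ.pr (fun ω => (Xn ω, Yn ω, M ω, W1 ω, W2 ω)) (x, y, m, w1, w2)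
          * μ.pr (fun ω => (M ω, W1 ω)) (m, w1)
          * μ.pr (fun ω => (M ω, W2 ω)) (m, w2)
        = μ.pr (fun ω => (M ω, W1 ω, W2 ω)) (m, w1, w2)
          * μ.pr (fun ω => (Xn ω, M ω, W1 ω)) (x, m, w1)
          * μ.pr (fun ω => (Yn ω, M ω, W2 ω)) (y, m, w2)) :
    μ.H (fun ω => (Xn ω, M ω)) + μ.H (fun ω => (Yn ω, M ω))
      - μ.H (fun ω => (Xn ω, Yn ω, M ω)) - μ.H M ≤ μ.H M := by
  -- abbreviations
  set q := μ.pr (fun ω => (Xn ω, Yn ω, M ω, W1 ω, W2 ω)) with hqdef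
  -- marginals
  have hP4 : ∀ y m w1 w2, μ.pr (fun ω => (Yn ω, M ω, W1 ω, W2 ω)) (y, m, w1, w2)
      = ∑ x, q (x, y, m, w1, w2) := by
    intro y m w1 w2
    rw [μ.pr_pair_marg (fun ω => (Yn ω, M ω, W1 ω, W2 ω)) Xn (y, m, w1, w2)]
    refine Finset.sum_congr rfl fun x _ => ?_
    exact μ.pr_comp_inj
      (fun t : (Fin n → 𝒳) × (Fin n → 𝒴) × 𝓜 × 𝒲₁ × 𝒲₂ =>
        ((t.2.1, t.2.2.1, t.2.2.2.1, t.2.2.2.2), t.1))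
      (by intro u v h; simp only [Prod.ext_iff] at h ⊢; tauto)
      (fun ω => (Xn ω, Yn ω, M ω, W1 ω, W2 ω)) (x, y, m, w1, w2)
  have hA : ∀ m w1, μ.pr (fun ω => (M ω, W1 ω)) (m, w1)
      = ∑ x, μ.pr (fun ω => (Xn ω, M ω, W1 ω)) (x, m, w1) := by
    intro m w1
    rw [μ.pr_pair_marg (fun ω => (M ω, W1 ω)) Xn (m, w1)]
    refine Finset.sum_congr rfl fun x _ => ?_
    exact μ.pr_comp_inj
      (fun t : (Fin n → 𝒳) × 𝓜 × 𝒲₁ => ((t.2.1, t.2.2), t.1))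
      (by intro u v h; simp only [Prod.ext_iff] at h ⊢; tauto)
      (fun ω => (Xn ω, M ω, W1 ω)) (x, m, w1)
  -- dominances
  have domP4A : ∀ y m w1 w2, μ.pr (fun ω => (Yn ω, M ω, W1 ω, W2 ω)) (y, m, w1, w2)
      ≤ μ.pr (fun ω => (M ω, W1 ω)) (m, w1) := fun y m w1 w2 =>
    μ.pr_le_pr_comp (fun t : (Fin n → 𝒴) × 𝓜 × 𝒲₁ × 𝒲₂ => (t.2.1, t.2.2.1))
      (fun ω => (Yn ω, M ω, W1 ω, W2 ω)) (y, m, w1, w2)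
  have domP4B : ∀ y m w1 w2, μ.pr (fun ω => (Yn ω, M ω, W1 ω, W2 ω)) (y, m, w1, w2)
      ≤ μ.pr (fun ω => (M ω, W2 ω)) (m, w2) := fun y m w1 w2 =>
    μ.pr_le_pr_comp (fun t : (Fin n → 𝒴) × 𝓜 × 𝒲₁ × 𝒲₂ => (t.2.1, t.2.2.2))
      (fun ω => (Yn ω, M ω, W1 ω, W2 ω)) (y, m, w1, w2)
  have domCA : ∀ m w1 w2, μ.pr (fun ω => (M ω, W1 ω, W2 ω)) (m, w1, w2)
      ≤ μ.pr (fun ω => (M ω, W1 ω)) (m, w1) := fun m w1 w2 =>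
    μ.pr_le_pr_comp (fun t : 𝓜 × 𝒲₁ × 𝒲₂ => (t.1, t.2.1))
      (fun ω => (M ω, W1 ω, W2 ω)) (m, w1, w2)
  have domqB : ∀ x y m w1 w2, q (x, y, m, w1, w2)
      ≤ μ.pr (fun ω => (M ω, W2 ω)) (m, w2) := fun x y m w1 w2 =>
    μ.pr_le_pr_comp (fun t : (Fin n → 𝒳) × (Fin n → 𝒴) × 𝓜 × 𝒲₁ × 𝒲₂ =>
        (t.2.2.1, t.2.2.2.2))
      (fun ω => (Xn ω, Yn ω, M ω, W1 ω, W2 ω)) (x, y, m, w1, w2)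
  -- conditional independence 2 : (Y,W2) vs W1 given (M,W2)-ish
  have hCI2 : ∀ y m w1 w2,
      μ.pr (fun ω => (Yn ω, M ω, W1 ω, W2 ω)) (y, m, w1, w2)
        * μ.pr (fun ω => (M ω, W2 ω)) (m, w2)
      = μ.pr (fun ω => (M ω, W1 ω, W2 ω)) (m, w1, w2)
        * μ.pr (fun ω => (Yn ω, M ω, W2 ω)) (y, m, w2) := by
    intro y m w1 w2
    have hsum : μ.pr (fun ω => (Yn ω, M ω, W1 ω, W2 ω)) (y, m, w1, w2)
        * μ.pr (fun ω => (M ω, W1 ω)) (m, w1) * μ.pr (fun ω => (M ω, W2 ω)) (m, w2)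
        = μ.pr (fun ω => (M ω, W1 ω, W2 ω)) (m, w1, w2)
          * μ.pr (fun ω => (M ω, W1 ω)) (m, w1)
          * μ.pr (fun ω => (Yn ω, M ω, W2 ω)) (y, m, w2) := by
      calc μ.pr (fun ω => (Yn ω, M ω, W1 ω, W2 ω)) (y, m, w1, w2)
            * μ.pr (fun ω => (M ω, W1 ω)) (m, w1) * μ.pr (fun ω => (M ω, W2 ω)) (m, w2)
          = (∑ x, q (x, y, m, w1, w2)) * μ.pr (fun ω => (M ω, W1 ω)) (m, w1)
            * μ.pr (fun ω => (M ω, W2 ω)) (m, w2) := by rw [hP4 y m w1 w2]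
        _ = ∑ x, q (x, y, m, w1, w2) * μ.pr (fun ω => (M ω, W1 ω)) (m, w1)
            * μ.pr (fun ω => (M ω, W2 ω)) (m, w2) := by
            rw [Finset.sum_mul, Finset.sum_mul]
        _ = ∑ x, μ.pr (fun ω => (M ω, W1 ω, W2 ω)) (m, w1, w2)
            * μ.pr (fun ω => (Xn ω, M ω, W1 ω)) (x, m, w1)
            * μ.pr (fun ω => (Yn ω, M ω, W2 ω)) (y, m, w2) :=
            Finset.sum_congr rfl fun x _ => hMarkov x y m w1 w2
        _ = μ.pr (fun ω => (M ω, W1 ω, W2 ω)) (m, w1, w2)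
            * (∑ x, μ.pr (fun ω => (Xn ω, M ω, W1 ω)) (x, m, w1))
            * μ.pr (fun ω => (Yn ω, M ω, W2 ω)) (y, m, w2) := by
            rw [Finset.mul_sum, Finset.sum_mul]
        _ = μ.pr (fun ω => (M ω, W1 ω, W2 ω)) (m, w1, w2)
            * μ.pr (fun ω => (M ω, W1 ω)) (m, w1)
            * μ.pr (fun ω => (Yn ω, M ω, W2 ω)) (y, m, w2) := by
            rw [← hA m w1]
    by_cases hA0 : μ.pr (fun ω => (M ω, W1 ω)) (m, w1) = 0
    · have h1 : μ.pr (fun ω => (Yn ω, M ω, W1 ω, W2 ω)) (y, m, w1, w2) = 0 :=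
        le_antisymm (hA0 ▸ domP4A y m w1 w2) (μ.pr_nonneg _ _)
      have h2 : μ.pr (fun ω => (M ω, W1 ω, W2 ω)) (m, w1, w2) = 0 :=
        le_antisymm (hA0 ▸ domCA m w1 w2) (μ.pr_nonneg _ _)
      rw [h1, h2, zero_mul, zero_mul]
    · apply mul_right_cancel₀ hA0
      calc μ.pr (fun ω => (Yn ω, M ω, W1 ω, W2 ω)) (y, m, w1, w2)
            * μ.pr (fun ω => (M ω, W2 ω)) (m, w2) * μ.pr (fun ω => (M ω, W1 ω)) (m, w1)
          = μ.pr (fun ω => (Yn ω, M ω, W1 ω, W2 ω)) (y, m, w1, w2)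
            * μ.pr (fun ω => (M ω, W1 ω)) (m, w1) * μ.pr (fun ω => (M ω, W2 ω)) (m, w2) := by
            ring
        _ = μ.pr (fun ω => (M ω, W1 ω, W2 ω)) (m, w1, w2)
            * μ.pr (fun ω => (M ω, W1 ω)) (m, w1)
            * μ.pr (fun ω => (Yn ω, M ω, W2 ω)) (y, m, w2) := hsum
        _ = μ.pr (fun ω => (M ω, W1 ω, W2 ω)) (m, w1, w2)
            * μ.pr (fun ω => (Yn ω, M ω, W2 ω)) (y, m, w2)
            * μ.pr (fun ω => (M ω, W1 ω)) (m, w1) := by ring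
  -- conditional independence 1
  have hCI1 : ∀ x y m w1 w2,
      q (x, y, m, w1, w2) * μ.pr (fun ω => (M ω, W1 ω)) (m, w1)
      = μ.pr (fun ω => (Xn ω, M ω, W1 ω)) (x, m, w1)
        * μ.pr (fun ω => (Yn ω, M ω, W1 ω, W2 ω)) (y, m, w1, w2) := by
    intro x y m w1 w2
    by_cases hB0 : μ.pr (fun ω => (M ω, W2 ω)) (m, w2) = 0
    · have h1 : q (x, y, m, w1, w2) = 0 :=
        le_antisymm (hB0 ▸ domqB x y m w1 w2) (μ.pr_nonneg _ _)
      have h2 : μ.pr (fun ω => (Yn ω, M ω, W1 ω, W2 ω)) (y, m, w1, w2) = 0 :=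
        le_antisymm (hB0 ▸ domP4B y m w1 w2) (μ.pr_nonneg _ _)
      rw [h1, h2, zero_mul, mul_zero]
    · apply mul_right_cancel₀ hB0
      calc q (x, y, m, w1, w2) * μ.pr (fun ω => (M ω, W1 ω)) (m, w1)
            * μ.pr (fun ω => (M ω, W2 ω)) (m, w2)
          = μ.pr (fun ω => (M ω, W1 ω, W2 ω)) (m, w1, w2)
            * μ.pr (fun ω => (Xn ω, M ω, W1 ω)) (x, m, w1)
            * μ.pr (fun ω => (Yn ω, M ω, W2 ω)) (y, m, w2) := hMarkov x y m w1 w2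
        _ = μ.pr (fun ω => (Xn ω, M ω, W1 ω)) (x, m, w1)
            * (μ.pr (fun ω => (M ω, W1 ω, W2 ω)) (m, w1, w2)
              * μ.pr (fun ω => (Yn ω, M ω, W2 ω)) (y, m, w2)) := by ring
        _ = μ.pr (fun ω => (Xn ω, M ω, W1 ω)) (x, m, w1)
            * (μ.pr (fun ω => (Yn ω, M ω, W1 ω, W2 ω)) (y, m, w1, w2)
              * μ.pr (fun ω => (M ω, W2 ω)) (m, w2)) := by rw [hCI2 y m w1 w2]
        _ = μ.pr (fun ω => (Xn ω, M ω, W1 ω)) (x, m, w1)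
            * μ.pr (fun ω => (Yn ω, M ω, W1 ω, W2 ω)) (y, m, w1, w2)
            * μ.pr (fun ω => (M ω, W2 ω)) (m, w2) := by ring
  -- CMI equalities from conditional independence
  have S3 := μ.CMI_eq_zero Xn (fun ω => (Yn ω, W2 ω)) (fun ω => (M ω, W1 ω)) (by
    rintro x ⟨y, w2⟩ ⟨m, w1⟩
    have g1 : μ.pr (fun ω => (Xn ω, (Yn ω, W2 ω), (M ω, W1 ω))) (x, (y, w2), (m, w1))
        = q (x, y, m, w1, w2) :=
      μ.pr_comp_inj
        (fun t : (Fin n → 𝒳) × (Fin n → 𝒴) × 𝓜 × 𝒲₁ × 𝒲₂ =>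
          (t.1, (t.2.1, t.2.2.2.2), (t.2.2.1, t.2.2.2.1)))
        (by intro u v h; simp only [Prod.ext_iff] at h ⊢; tauto)
        (fun ω => (Xn ω, Yn ω, M ω, W1 ω, W2 ω)) (x, y, m, w1, w2)
    have g3 : μ.pr (fun ω => ((Yn ω, W2 ω), (M ω, W1 ω))) ((y, w2), (m, w1))
        = μ.pr (fun ω => (Yn ω, M ω, W1 ω, W2 ω)) (y, m, w1, w2) :=
      μ.pr_comp_inj
        (fun t : (Fin n → 𝒴) × 𝓜 × 𝒲₁ × 𝒲₂ =>
          ((t.1, t.2.2.2), (t.2.1, t.2.2.1)))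
        (by intro u v h; simp only [Prod.ext_iff] at h ⊢; tauto)
        (fun ω => (Yn ω, M ω, W1 ω, W2 ω)) (y, m, w1, w2)
    rw [g1, g3]
    exact hCI1 x y m w1 w2)
  have S4 := μ.CMI_eq_zero W1 Yn (fun ω => (M ω, W2 ω)) (by
    rintro w1 y ⟨m, w2⟩
    have g4 : μ.pr (fun ω => (W1 ω, Yn ω, (M ω, W2 ω))) (w1, y, (m, w2))
        = μ.pr (fun ω => (Yn ω, M ω, W1 ω, W2 ω)) (y, m, w1, w2) :=
      μ.pr_comp_inj
        (fun t : (Fin n → 𝒴) × 𝓜 × 𝒲₁ × 𝒲₂ =>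
          (t.2.2.1, t.1, (t.2.1, t.2.2.2)))
        (by intro u v h; simp only [Prod.ext_iff] at h ⊢; tauto)
        (fun ω => (Yn ω, M ω, W1 ω, W2 ω)) (y, m, w1, w2)
    have g5 : μ.pr (fun ω => (W1 ω, (M ω, W2 ω))) (w1, (m, w2))
        = μ.pr (fun ω => (M ω, W1 ω, W2 ω)) (m, w1, w2) :=
      μ.pr_comp_inj
        (fun t : 𝓜 × 𝒲₁ × 𝒲₂ => (t.2.1, (t.1, t.2.2)))
        (by intro u v h; simp only [Prod.ext_iff] at h ⊢; tauto)
        (fun ω => (M ω, W1 ω, W2 ω)) (m, w1, w2)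
    rw [g4, g5]
    exact hCI2 y m w1 w2)
  -- CMI nonnegativity steps
  have S1 := μ.CMI_nonneg Xn W2 (fun ω => (Yn ω, M ω))
  have S2 := μ.CMI_nonneg W1 (fun ω => (Yn ω, W2 ω)) (fun ω => (Xn ω, M ω))
  -- entropy reindexing equalities
  have e1 : μ.H (fun ω => (Xn ω, W2 ω, (Yn ω, M ω)))
      = μ.H (fun ω => (Xn ω, (Yn ω, W2 ω), M ω)) :=
    μ.H_eq_of_inj (fun t : (Fin n → 𝒳) × ((Fin n → 𝒴) × 𝒲₂) × 𝓜 =>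
        (t.1, t.2.1.2, (t.2.1.1, t.2.2)))
      (by intro u v h; simp only [Prod.ext_iff] at h ⊢; tauto)
      (fun ω => (Xn ω, (Yn ω, W2 ω), M ω))
  have e3 : μ.H (fun ω => (W2 ω, (Yn ω, M ω)))
      = μ.H (fun ω => ((Yn ω, W2 ω), M ω)) :=
    μ.H_eq_of_inj (fun t : ((Fin n → 𝒴) × 𝒲₂) × 𝓜 => (t.1.2, (t.1.1, t.2)))
      (by intro u v h; simp only [Prod.ext_iff] at h ⊢; tauto)
      (fun ω => ((Yn ω, W2 ω), M ω))
  have e4 : μ.H (fun ω => (W1 ω, (Yn ω, W2 ω), (Xn ω, M ω)))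
      = μ.H (fun ω => ((Xn ω, W1 ω), (Yn ω, W2 ω), M ω)) :=
    μ.H_eq_of_inj (fun t : ((Fin n → 𝒳) × 𝒲₁) × ((Fin n → 𝒴) × 𝒲₂) × 𝓜 =>
        (t.1.2, t.2.1, (t.1.1, t.2.2)))
      (by intro u v h; simp only [Prod.ext_iff] at h ⊢; tauto)
      (fun ω => ((Xn ω, W1 ω), (Yn ω, W2 ω), M ω))
  have e5 : μ.H (fun ω => (W1 ω, (Xn ω, M ω)))
      = μ.H (fun ω => ((Xn ω, W1 ω), M ω)) :=
    μ.H_eq_of_inj (fun t : ((Fin n → 𝒳) × 𝒲₁) × 𝓜 => (t.1.2, (t.1.1, t.2)))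
      (by intro u v h; simp only [Prod.ext_iff] at h ⊢; tauto)
      (fun ω => ((Xn ω, W1 ω), M ω))
  have e6 : μ.H (fun ω => ((Yn ω, W2 ω), (Xn ω, M ω)))
      = μ.H (fun ω => (Xn ω, (Yn ω, W2 ω), M ω)) :=
    μ.H_eq_of_inj (fun t : (Fin n → 𝒳) × ((Fin n → 𝒴) × 𝒲₂) × 𝓜 =>
        (t.2.1, (t.1, t.2.2)))
      (by intro u v h; simp only [Prod.ext_iff] at h ⊢; tauto)
      (fun ω => (Xn ω, (Yn ω, W2 ω), M ω))
  have e7 : μ.H (fun ω => (Xn ω, (M ω, W1 ω)))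
      = μ.H (fun ω => ((Xn ω, W1 ω), M ω)) :=
    μ.H_eq_of_inj (fun t : ((Fin n → 𝒳) × 𝒲₁) × 𝓜 => (t.1.1, (t.2, t.1.2)))
      (by intro u v h; simp only [Prod.ext_iff] at h ⊢; tauto)
      (fun ω => ((Xn ω, W1 ω), M ω))
  have e8 : μ.H (fun ω => ((Yn ω, W2 ω), (M ω, W1 ω)))
      = μ.H (fun ω => (W1 ω, (Yn ω, W2 ω), M ω)) :=
    μ.H_eq_of_inj (fun t : 𝒲₁ × ((Fin n → 𝒴) × 𝒲₂) × 𝓜 =>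
        (t.2.1, (t.2.2, t.1)))
      (by intro u v h; simp only [Prod.ext_iff] at h ⊢; tauto)
      (fun ω => (W1 ω, (Yn ω, W2 ω), M ω))
  have e9 : μ.H (fun ω => (Xn ω, (Yn ω, W2 ω), (M ω, W1 ω)))
      = μ.H (fun ω => ((Xn ω, W1 ω), (Yn ω, W2 ω), M ω)) :=
    μ.H_eq_of_inj (fun t : ((Fin n → 𝒳) × 𝒲₁) × ((Fin n → 𝒴) × 𝒲₂) × 𝓜 =>
        (t.1.1, t.2.1, (t.2.2, t.1.2)))
      (by intro u v h; simp only [Prod.ext_iff] at h ⊢; tauto)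
      (fun ω => ((Xn ω, W1 ω), (Yn ω, W2 ω), M ω))
  have e10 : μ.H (fun ω => (W1 ω, (M ω, W2 ω)))
      = μ.H (fun ω => (M ω, W1 ω, W2 ω)) :=
    μ.H_eq_of_inj (fun t : 𝓜 × 𝒲₁ × 𝒲₂ => (t.2.1, (t.1, t.2.2)))
      (by intro u v h; simp only [Prod.ext_iff] at h ⊢; tauto)
      (fun ω => (M ω, W1 ω, W2 ω))
  have e11 : μ.H (fun ω => (Yn ω, (M ω, W2 ω)))
      = μ.H (fun ω => ((Yn ω, W2 ω), M ω)) :=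
    μ.H_eq_of_inj (fun t : ((Fin n → 𝒴) × 𝒲₂) × 𝓜 => (t.1.1, (t.2, t.1.2)))
      (by intro u v h; simp only [Prod.ext_iff] at h ⊢; tauto)
      (fun ω => ((Yn ω, W2 ω), M ω))
  have e12 : μ.H (fun ω => (W1 ω, Yn ω, (M ω, W2 ω)))
      = μ.H (fun ω => (W1 ω, (Yn ω, W2 ω), M ω)) :=
    μ.H_eq_of_inj (fun t : 𝒲₁ × ((Fin n → 𝒴) × 𝒲₂) × 𝓜 =>
        (t.1, t.2.1.1, (t.2.2, t.2.1.2)))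
      (by intro u v h; simp only [Prod.ext_iff] at h ⊢; tauto)
      (fun ω => (W1 ω, (Yn ω, W2 ω), M ω))
  have e13 : μ.H (fun ω => ((W1 ω, W2 ω), M ω))
      = μ.H (fun ω => (M ω, W1 ω, W2 ω)) :=
    μ.H_eq_of_inj (fun t : 𝓜 × 𝒲₁ × 𝒲₂ => (t.2, t.1))
      (by intro u v h; simp only [Prod.ext_iff] at h ⊢; tauto)
      (fun ω => (M ω, W1 ω, W2 ω))
  -- remaining inequalities
  have S5a := μ.H_pair_le M W1
  have S5b := μ.H_pair_le M W2
  have S6 := μ.H_pair_eq_of_indep W1 W2 hInd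
  have S7 := μ.H_fst_le (fun ω => (W1 ω, W2 ω)) M
  linarith


/-- If `W1 ⊥ W2` and `X^n − (M,W1) − (M,W2) − Y^n`, then
`I(X^n;Y^n|M) ≤ H(M)`; in particular if `M` takes at most `2^{nR}` values then
`I(X^n;Y^n|M) ≤ nR`. -/
theorem stmt2 {Ω 𝒳 𝒴 𝓜 𝒲₁ 𝒲₂ : Type*} [Fintype Ω]
    [Fintype 𝒳] [DecidableEq 𝒳] [Fintype 𝒴] [DecidableEq 𝒴]
    [Fintype 𝓜] [DecidableEq 𝓜]
    [Fintype 𝒲₁] [DecidableEq 𝒲₁] [Fintype 𝒲₂] [DecidableEq 𝒲₂]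
    {n : ℕ}
    (μ : FinPMF Ω) (Xn : Ω → Fin n → 𝒳) (Yn : Ω → Fin n → 𝒴) (M : Ω → 𝓜)
    (W1 : Ω → 𝒲₁) (W2 : Ω → 𝒲₂)
    (hInd : μ.Indep W1 W2)
    (hMarkov : ∀ (x : Fin n → 𝒳) (y : Fin n → 𝒴) (m : 𝓜) (w1 : 𝒲₁) (w2 : 𝒲₂),
      μ.pr (fun ω => (Xn ω, Yn ω, M ω, W1 ω, W2 ω)) (x, y, m, w1, w2)
          * μ.pr (fun ω => (M ω, W1 ω)) (m, w1)
          * μ.pr (fun ω => (M ω, W2 ω)) (m, w2)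
        = μ.pr (fun ω => (M ω, W1 ω, W2 ω)) (m, w1, w2)
          * μ.pr (fun ω => (Xn ω, M ω, W1 ω)) (x, m, w1)
          * μ.pr (fun ω => (Yn ω, M ω, W2 ω)) (y, m, w2)) :
    μ.CI Xn Yn M ≤ μ.H M ∧
      ∀ R : ℝ, (Fintype.card 𝓜 : ℝ) ≤ (2 : ℝ) ^ ((n : ℝ) * R) →
        μ.CI Xn Yn M ≤ (n : ℝ) * R := by
  have main : μ.CI Xn Yn M ≤ μ.H M := stmt2' μ Xn Yn M W1 W2 hInd hMarkov
  refine ⟨main, fun R hR => ?_⟩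
  have hne : Nonempty Ω := by
    by_contra h
    have : IsEmpty Ω := not_nonempty_iff.mp h
    have h1 := μ.sum_one
    rw [Finset.univ_eq_empty, Finset.sum_empty] at h1
    norm_num at h1
  haveI : Nonempty 𝓜 := ⟨M (Classical.arbitrary Ω)⟩
  have hHM := μ.H_le_log_card M
  have hpos : (0:ℝ) < Fintype.card 𝓜 := by exact_mod_cast Fintype.card_pos
  have h2 : Real.logb 2 (Fintype.card 𝓜) ≤ Real.logb 2 ((2:ℝ) ^ ((n:ℝ) * R)) :=
    (Real.logb_le_logb (by norm_num) hpos (Real.rpow_pos_of_pos (by norm_num) _)).2 hR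
  have h3 : Real.logb 2 ((2:ℝ) ^ ((n:ℝ) * R)) = (n:ℝ) * R :=
    Real.logb_rpow (by norm_num) (by norm_num)
  linarith
end

section
/- Let p and p' be probability distributions on a finite set 𝒜 with |𝒜| ≥ 2, and suppose the total variation distance δ = ‖p − p'‖_TV satisfies δ ≤ 1/4. Then |H(p) − H(p')| ≤ 2δ log(|𝒜|) + h(2δ), where h is the binary entropy function. -/
open scoped BigOperators

section EntropyContinuityAux

open Real

lemma nml_subadd {y t : ℝ} (hy : 0 ≤ y) (ht : 0 ≤ t) :
    negMulLog (y + t) ≤ negMulLog y + negMulLog t := by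
  rcases eq_or_lt_of_le (add_nonneg hy ht) with h | h
  · have hy0 : y = 0 := by linarith
    have ht0 : t = 0 := by linarith
    simp [hy0, ht0]
  · have hs : y + t ≠ 0 := ne_of_gt h
    have h1 : (t/(y+t)) • negMulLog (y+t) + (y/(y+t)) • negMulLog 0
        ≤ negMulLog ((t/(y+t)) • (y+t) + (y/(y+t)) • (0:ℝ)) :=
      concaveOn_negMulLog.2 (Set.mem_Ici.2 h.le) (Set.mem_Ici.2 le_rfl)
        (by positivity) (by positivity)
        (by rw [← add_div, add_comm t y, div_self hs])
    have h2 : (y/(y+t)) • negMulLog (y+t) + (t/(y+t)) • negMulLog 0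
        ≤ negMulLog ((y/(y+t)) • (y+t) + (t/(y+t)) • (0:ℝ)) :=
      concaveOn_negMulLog.2 (Set.mem_Ici.2 h.le) (Set.mem_Ici.2 le_rfl)
        (by positivity) (by positivity)
        (by rw [← add_div, div_self hs])
    have hts : (t/(y+t)) * (y+t) = t := by field_simp
    have hys : (y/(y+t)) * (y+t) = y := by field_simp
    simp only [smul_eq_mul, negMulLog_zero, mul_zero, add_zero, hts, hys] at h1 h2
    have hsum : (t/(y+t)) * negMulLog (y+t) + (y/(y+t)) * negMulLog (y+t)
        = negMulLog (y+t) := by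
      rw [← add_mul, ← add_div, add_comm t y, div_self hs, one_mul]
    linarith

lemma nml_lower {y t : ℝ} (hy : 0 ≤ y) (ht : 0 ≤ t) (h1 : y + t ≤ 1) :
    negMulLog y ≤ negMulLog (y + t) + negMulLog (1 - t) := by
  rcases eq_or_lt_of_le (show y ≤ 1 by linarith) with hy1 | hy1
  · have ht0 : t = 0 := by linarith
    simp [hy1, ht0]
  · have hden : 0 < 1 - y := by linarith
    have hθ0 : 0 ≤ t / (1 - y) := by positivity
    have hθ1 : t / (1 - y) ≤ 1 := by rw [div_le_one hden]; linarith
    have hA : (t/(1-y)) • negMulLog 1 + (1 - t/(1-y)) • negMulLog y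
        ≤ negMulLog ((t/(1-y)) • (1:ℝ) + (1 - t/(1-y)) • y) :=
      concaveOn_negMulLog.2 (Set.mem_Ici.2 zero_le_one) (Set.mem_Ici.2 hy)
        hθ0 (by linarith) (by ring)
    have hB : (1 - t/(1-y)) • negMulLog 1 + (t/(1-y)) • negMulLog y
        ≤ negMulLog ((1 - t/(1-y)) • (1:ℝ) + (t/(1-y)) • y) :=
      concaveOn_negMulLog.2 (Set.mem_Ici.2 zero_le_one) (Set.mem_Ici.2 hy)
        (by linarith) hθ0 (by ring)
    have e1 : (t/(1-y)) * (1:ℝ) + (1 - t/(1-y)) * y = y + t := by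
      field_simp; ring
    have e2 : (1 - t/(1-y)) * (1:ℝ) + (t/(1-y)) * y = 1 - t := by
      field_simp; ring
    simp only [smul_eq_mul, negMulLog_one, mul_zero, zero_add, e1, e2] at hA hB
    nlinarith [hA, hB, hθ0, hθ1]

lemma nml_one_sub_le {t : ℝ} (ht0 : 0 ≤ t) (ht2 : t ≤ 1/2) :
    negMulLog (1 - t) ≤ negMulLog t := by
  set φ : ℝ → ℝ := fun x => negMulLog x - negMulLog (1 - x) with hφ
  have hderiv : ∀ x ∈ interior (Set.Icc (0:ℝ) (1/2)),
      HasDerivAt φ (-Real.log x - Real.log (1 - x) - 2) x := by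
    intro x hx
    rw [interior_Icc] at hx
    obtain ⟨hx0, hx2⟩ := hx
    have h1 : HasDerivAt negMulLog (-Real.log x - 1) x := hasDerivAt_negMulLog (ne_of_gt hx0)
    have h2 : HasDerivAt (fun z : ℝ => (1:ℝ) - z) (-1) x := by
      simpa using (hasDerivAt_id x).const_sub 1
    have h3 : HasDerivAt negMulLog (-Real.log (1 - x) - 1) (1 - x) :=
      hasDerivAt_negMulLog (by norm_num; linarith)
    have h4 : HasDerivAt (fun z : ℝ => negMulLog (1 - z))
        ((-Real.log (1 - x) - 1) * (-1)) x := h3.comp x h2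
    have := h1.sub h4
    exact this.congr_deriv (by ring)
  have hconc : ConcaveOn ℝ (Set.Icc (0:ℝ) (1/2)) φ := by
    apply AntitoneOn.concaveOn_of_deriv (convex_Icc _ _)
    · apply ContinuousOn.sub continuous_negMulLog.continuousOn
      exact (continuous_negMulLog.comp (continuous_const.sub continuous_id)).continuousOn
    · intro x hx
      exact (hderiv x hx).differentiableAt.differentiableWithinAt
    · intro a ha b hb hab
      rw [(hderiv a ha).deriv, (hderiv b hb).deriv]
      rw [interior_Icc] at ha hb
      have hlog : Real.log (a * (1 - a)) ≤ Real.log (b * (1 - b)) := by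
        apply Real.log_le_log (by nlinarith [ha.1, ha.2])
        nlinarith [ha.1, ha.2, hb.1, hb.2]
      rw [Real.log_mul (ne_of_gt ha.1) (by nlinarith [ha.2]),
          Real.log_mul (ne_of_gt hb.1) (by nlinarith [hb.2])] at hlog
      linarith
  have h0 : φ 0 = 0 := by simp [hφ]
  have h2 : φ (1/2) = 0 := by norm_num [hφ]
  have key : (1 - 2*t) • φ 0 + (2*t) • φ (1/2) ≤ φ ((1 - 2*t) • (0:ℝ) + (2*t) • (1/2 : ℝ)) :=
    hconc.2 (by constructor <;> norm_num) (by constructor <;> norm_num)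
      (by linarith) (by linarith) (by ring)
  have : (1 - 2*t) • (0:ℝ) + (2*t) • (1/2 : ℝ) = t := by push_cast [smul_eq_mul]; ring
  rw [this, h0, h2] at key
  simp only [smul_eq_mul, mul_zero, add_zero, hφ] at key
  linarith

lemma nml_diff_le {x y : ℝ} (hy0 : 0 ≤ y) (hyx : y ≤ x) (hx1 : x ≤ 1)
    (h2 : x - y ≤ 1/2) : |negMulLog x - negMulLog y| ≤ negMulLog (x - y) := by
  rw [abs_le]
  constructor
  · have := nml_lower hy0 (by linarith : (0:ℝ) ≤ x - y) (by linarith)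
    have h1t := nml_one_sub_le (by linarith : (0:ℝ) ≤ x - y) h2
    have hx : y + (x - y) = x := by ring
    rw [hx] at this
    linarith
  · have := nml_subadd hy0 (by linarith : (0:ℝ) ≤ x - y)
    have hx : y + (x - y) = x := by ring
    rw [hx] at this
    linarith

lemma nml_abs_diff {x y : ℝ} (hx0 : 0 ≤ x) (hx1 : x ≤ 1) (hy0 : 0 ≤ y) (hy1 : y ≤ 1)
    (h : |x - y| ≤ 1/2) : |negMulLog x - negMulLog y| ≤ negMulLog |x - y| := by
  rcases le_total y x with hle | hle
  · rw [abs_of_nonneg (by linarith : (0:ℝ) ≤ x - y)] at h ⊢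
    exact nml_diff_le hy0 hle hx1 h
  · rw [abs_of_nonpos (by linarith : x - y ≤ 0)] at h ⊢
    rw [abs_sub_comm]
    have : -(x - y) = y - x := by ring
    rw [this] at h ⊢
    exact nml_diff_le hx0 hle hy1 h

lemma main_nat {A : Type*} [Fintype A] [DecidableEq A] (hA : 2 ≤ Fintype.card A)
    (p p' : A → ℝ)
    (hp0 : ∀ a, 0 ≤ p a) (hp1 : ∑ a, p a = 1)
    (hp'0 : ∀ a, 0 ≤ p' a) (hp'1 : ∑ a, p' a = 1)
    (δ : ℝ) (hδ : δ = (1 / 2 : ℝ) * ∑ a, |p a - p' a|) (hδ4 : δ ≤ 1 / 4) :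
    |(∑ a, negMulLog (p a)) - ∑ a, negMulLog (p' a)|
      ≤ 2 * δ * Real.log (Fintype.card A) + (negMulLog (2 * δ) + negMulLog (1 - 2 * δ)) := by
  have hδ0 : 0 ≤ δ := by
    rw [hδ]
    have : (0:ℝ) ≤ ∑ a, |p a - p' a| := Finset.sum_nonneg fun a _ => abs_nonneg _
    linarith
  have hsumt : ∑ a, |p a - p' a| = 2 * δ := by rw [hδ]; ring
  have hta : ∀ a : A, |p a - p' a| ≤ 2 * δ := fun a => by
    rw [← hsumt]
    exact Finset.single_le_sum (f := fun b => |p b - p' b|) (fun b _ => abs_nonneg _) (Finset.mem_univ a)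
  have hp_le1 : ∀ a, p a ≤ 1 := fun a => by
    rw [← hp1]
    exact Finset.single_le_sum (f := fun b => p b) (fun b _ => hp0 b) (Finset.mem_univ a)
  have hp'_le1 : ∀ a, p' a ≤ 1 := fun a => by
    rw [← hp'1]
    exact Finset.single_le_sum (f := fun b => p' b) (fun b _ => hp'0 b) (Finset.mem_univ a)
  set n : ℕ := Fintype.card A with hn
  have hn0 : (0:ℝ) < n := by
    have : (2:ℝ) ≤ n := by exact_mod_cast hA
    linarith
  -- Step 1+2 : triangle + per-term
  have step12 : |(∑ a, negMulLog (p a)) - ∑ a, negMulLog (p' a)|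
      ≤ ∑ a, negMulLog |p a - p' a| := by
    rw [← Finset.sum_sub_distrib]
    refine (Finset.abs_sum_le_sum_abs _ _).trans (Finset.sum_le_sum fun a _ => ?_)
    exact nml_abs_diff (hp0 a) (hp_le1 a) (hp'0 a) (hp'_le1 a) ((hta a).trans (by linarith))
  -- Step 3 : Jensen
  have hjensen : ∑ a, ((n:ℝ)⁻¹) • negMulLog |p a - p' a|
      ≤ negMulLog (∑ a, ((n:ℝ)⁻¹) • |p a - p' a|) := by
    refine ConcaveOn.le_map_sum (t := Finset.univ) (w := fun _ : A => (n:ℝ)⁻¹)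
      (p := fun a => |p a - p' a|) concaveOn_negMulLog ?_ ?_ ?_
    · intro a _; positivity
    · simp only [Finset.sum_const, Finset.card_univ, nsmul_eq_mul, ← hn]
      field_simp
    · intro a _; exact Set.mem_Ici.2 (abs_nonneg _)
  have hw : ∑ a, ((n:ℝ)⁻¹) • |p a - p' a| = (n:ℝ)⁻¹ * (2 * δ) := by
    rw [← Finset.smul_sum, hsumt, smul_eq_mul]
  rw [hw] at hjensen
  have step3 : ∑ a, negMulLog |p a - p' a| ≤ (n:ℝ) * negMulLog ((n:ℝ)⁻¹ * (2 * δ)) := by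
    have := mul_le_mul_of_nonneg_left hjensen hn0.le
    rw [Finset.mul_sum] at this
    calc ∑ a, negMulLog |p a - p' a|
        = ∑ a, (n:ℝ) * (((n:ℝ)⁻¹) • negMulLog |p a - p' a|) := by
          refine Finset.sum_congr rfl fun a _ => ?_
          rw [smul_eq_mul, ← mul_assoc, mul_inv_cancel₀ hn0.ne', one_mul]
      _ ≤ (n:ℝ) * negMulLog ((n:ℝ)⁻¹ * (2 * δ)) := this
  -- Step 4 : compute
  have step4 : (n:ℝ) * negMulLog ((n:ℝ)⁻¹ * (2 * δ))
      = 2 * δ * Real.log n + negMulLog (2 * δ) := by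
    rcases eq_or_lt_of_le hδ0 with h0 | h0
    · simp [← h0]
    · rw [negMulLog, negMulLog, Real.log_mul (by positivity) (by positivity),
        Real.log_inv]
      field_simp
      ring
  have hlast : 0 ≤ negMulLog (1 - 2 * δ) :=
    negMulLog_nonneg (by linarith) (by linarith)
  calc |(∑ a, negMulLog (p a)) - ∑ a, negMulLog (p' a)|
      ≤ ∑ a, negMulLog |p a - p' a| := step12
    _ ≤ (n:ℝ) * negMulLog ((n:ℝ)⁻¹ * (2 * δ)) := step3
    _ = 2 * δ * Real.log n + negMulLog (2 * δ) := step4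
    _ ≤ 2 * δ * Real.log n + (negMulLog (2 * δ) + negMulLog (1 - 2 * δ)) := by linarith


/-- Uniform continuity of entropy in total variation distance
(Cover–Thomas Thm 17.3.3 variant): if `δ = ‖p − p'‖_TV ≤ 1/4` then
`|H(p) − H(p')| ≤ 2δ log₂|𝒜| + h(2δ)`. -/
theorem stmt5 {A : Type*} [Fintype A] [DecidableEq A] (hA : 2 ≤ Fintype.card A)
    (p p' : A → ℝ)
    (hp0 : ∀ a, 0 ≤ p a) (hp1 : ∑ a, p a = 1)
    (hp'0 : ∀ a, 0 ≤ p' a) (hp'1 : ∑ a, p' a = 1)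
    (δ : ℝ) (hδ : δ = (1 / 2 : ℝ) * ∑ a, |p a - p' a|) (hδ4 : δ ≤ 1 / 4) :
    |(-∑ a, p a * Real.logb 2 (p a)) - (-∑ a, p' a * Real.logb 2 (p' a))|
      ≤ 2 * δ * Real.logb 2 (Fintype.card A) + binEnt (2 * δ) := by
  have hL : (0:ℝ) < Real.log 2 := Real.log_pos one_lt_two
  have hmul : ∀ x : ℝ, x * Real.logb 2 x = -negMulLog x / Real.log 2 := by
    intro x
    rw [Real.logb, negMulLog]
    field_simp
  have hsum : ∀ q : A → ℝ, -∑ a, q a * Real.logb 2 (q a)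
      = (∑ a, negMulLog (q a)) / Real.log 2 := by
    intro q
    rw [Finset.sum_div, ← Finset.sum_neg_distrib]
    refine Finset.sum_congr rfl fun a _ => ?_
    rw [hmul]
    ring
  have hbin : binEnt (2 * δ) = (negMulLog (2 * δ) + negMulLog (1 - 2 * δ)) / Real.log 2 := by
    rw [binEnt, hmul, hmul]
    ring
  have hlogb : Real.logb 2 (Fintype.card A) = Real.log (Fintype.card A) / Real.log 2 := rfl
  rw [hsum, hsum, hbin, hlogb, div_sub_div_same, abs_div, abs_of_pos hL]
  rw [show 2 * δ * (Real.log (Fintype.card A) / Real.log 2)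
      + (negMulLog (2 * δ) + negMulLog (1 - 2 * δ)) / Real.log 2
      = (2 * δ * Real.log (Fintype.card A)
        + (negMulLog (2 * δ) + negMulLog (1 - 2 * δ))) / Real.log 2 by ring]
  gcongr
  exact main_nat hA p p' hp0 hp1 hp'0 hp'1 δ hδ hδ4

end EntropyContinuityAux
end

section
/- Let (X,Y) be DSBS(a) with a ∈ (0, 1/2), let b = (1 − √(1−2a))/2, and define U ∈ {0,1} by the conditional kernel p*(0|0,1) = p*(1|1,0) = 1/2 and p*(0|1,1) = p*(1|0,0) = b²/(1−a) (with the complementary probabilities determined). Then under the joint distribution q(x,y) p*(u|x,y), X and Y are conditionally independent given U (i.e., X − U − Y is a Markov chain), and I(X,Y;U) = 1 + h(a) − 2h(b). -/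
open scoped BigOperators

set_option maxHeartbeats 2000000 in
/-- For DSBS(a), `a ∈ (0,1/2)`, with `b = (1 − √(1−2a))/2` and Wyner's
optimal test channel `p*(u|x,y)` (probability `1/2` each when `x ≠ y`; probability
`b²/(1−a)` of `u ≠ x` when `x = y`), the joint distribution `q(x,y)p*(u|x,y)` makes
`X − U − Y` a Markov chain and `I(X,Y;U) = 1 + h(a) − 2h(b)`. -/
theorem stmt11 (a b : ℝ) (ha : a ∈ Set.Ioo (0 : ℝ) (1 / 2))
    (hb : b = (1 - Real.sqrt (1 - 2 * a)) / 2)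
    (μ : FinPMF (Bool × Bool × Bool))
    (hμ : ∀ z : Bool × Bool × Bool,
      μ.p z = (if z.1 = z.2.1 then (1 - a) / 2 else a / 2) *
        (if z.1 = z.2.1 then
          (if z.2.2 = z.1 then 1 - b ^ 2 / (1 - a) else b ^ 2 / (1 - a))
         else 1 / 2)) :
    μ.CondIndep (fun z => z.1) (fun z => z.2.1) (fun z => z.2.2) ∧
      μ.I2 (fun z => (z.1, z.2.1)) (fun z => z.2.2) = 1 + binEnt a - 2 * binEnt b := by
  obtain ⟨ha0, ha2⟩ := ha
  have h2a : (0:ℝ) ≤ 1 - 2 * a := by linarith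
  have hs : Real.sqrt (1 - 2 * a) ^ 2 = 1 - 2 * a := Real.sq_sqrt h2a
  have hsn : 0 ≤ Real.sqrt (1 - 2 * a) := Real.sqrt_nonneg _
  have hs1 : Real.sqrt (1 - 2 * a) < 1 := by nlinarith
  have hspos : 0 < Real.sqrt (1 - 2 * a) := Real.sqrt_pos.mpr (by linarith)
  have hbpos : 0 < b := by rw [hb]; linarith
  have hb1 : b < 1 / 2 := by rw [hb]; linarith
  have h1bpos : 0 < 1 - b := by linarith
  have h12b : 1 - 2 * b = Real.sqrt (1 - 2 * a) := by rw [hb]; ring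
  have hkey : a = 2 * b * (1 - b) := by nlinarith [hs, h12b]
  have h1a : (1:ℝ) - a = (1 - b) ^ 2 + b ^ 2 := by nlinarith
  have h1apos : (0:ℝ) < 1 - a := by linarith
  have hv1 : (1 - a) / 2 * (1 - b ^ 2 / (1 - a)) = (1 - b) * (1 - b) / 2 := by
    field_simp
    nlinarith
  have hv2 : (1 - a) / 2 * (b ^ 2 / (1 - a)) = b * b / 2 := by
    field_simp
  have hv3 : a / 2 * (1 / 2) = b * (1 - b) / 2 := by nlinarith
  have hμ' : ∀ z : Bool × Bool × Bool, μ.p z =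
      (if z.1 = z.2.2 then 1 - b else b) * (if z.2.1 = z.2.2 then 1 - b else b) / 2 := by
    intro z
    obtain ⟨x, y, u⟩ := z
    rw [hμ]
    cases x <;> cases y <;> cases u <;>
      simp only [if_true, if_false, Bool.true_eq_false, Bool.false_eq_true, reduceIte] <;>
      first
        | linarith [hv1]
        | linarith [hv2]
        | linarith [hv3]
        | nlinarith [hv1, hv2, hv3]
  have prU : ∀ u : Bool, μ.pr (fun z => z.2.2) u = 1 / 2 := by
    intro u
    cases u <;>
      simp only [FinPMF.pr, Fintype.sum_prod_type, Fintype.sum_bool, hμ',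
        Bool.true_eq_false, Bool.false_eq_true, reduceIte, if_true, if_false] <;> ring
  have prXY : ∀ x y : Bool, μ.pr (fun z => (z.1, z.2.1)) (x, y) =
      if x = y then (1 - a) / 2 else a / 2 := by
    intro x y
    cases x <;> cases y <;>
      simp only [FinPMF.pr, Fintype.sum_prod_type, Fintype.sum_bool, hμ, Prod.mk.injEq,
        Bool.true_eq_false, Bool.false_eq_true, reduceIte, if_true, if_false,
        and_true, and_false, true_and, false_and] <;> ring
  have prXYU : ∀ x y u : Bool, μ.pr (fun z => ((z.1, z.2.1), z.2.2)) ((x, y), u) =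
      (if x = u then 1 - b else b) * (if y = u then 1 - b else b) / 2 := by
    intro x y u
    cases x <;> cases y <;> cases u <;>
      simp only [FinPMF.pr, Fintype.sum_prod_type, Fintype.sum_bool, hμ', Prod.mk.injEq,
        Bool.true_eq_false, Bool.false_eq_true, reduceIte, if_true, if_false,
        and_true, and_false, true_and, false_and] <;> ring
  have l2 : Real.logb 2 2 = 1 := by
    rw [Real.logb, div_self (by positivity : Real.log 2 ≠ 0)]
  have hlog2 : ∀ x : ℝ, 0 < x → Real.logb 2 (x / 2) = Real.logb 2 x - 1 := by
    intro x hx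
    rw [Real.logb_div hx.ne' (by norm_num), l2]
  have hlog : ∀ x y : ℝ, 0 < x → 0 < y →
      Real.logb 2 (x * y / 2) = Real.logb 2 x + Real.logb 2 y - 1 := by
    intro x y hx hy
    rw [Real.logb_div (by positivity) (by norm_num), Real.logb_mul hx.ne' hy.ne', l2]
  have HU : μ.H (fun z => z.2.2) = 1 := by
    simp only [FinPMF.H, Fintype.sum_bool, prU]
    rw [hlog2 1 one_pos, Real.logb_one]
    ring
  have HXY : μ.H (fun z => (z.1, z.2.1)) = 1 + binEnt a := by
    simp only [FinPMF.H, Fintype.sum_prod_type, Fintype.sum_bool, prXY,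
      Bool.true_eq_false, Bool.false_eq_true, reduceIte, if_true, if_false]
    rw [hlog2 _ h1apos, hlog2 _ ha0, binEnt]
    ring
  have HXYU : μ.H (fun z => ((z.1, z.2.1), z.2.2)) = 1 + 2 * binEnt b := by
    simp only [FinPMF.H, Fintype.sum_prod_type, Fintype.sum_bool, prXYU,
      Bool.true_eq_false, Bool.false_eq_true, reduceIte, if_true, if_false]
    rw [hlog _ _ h1bpos h1bpos, hlog _ _ h1bpos hbpos, hlog _ _ hbpos h1bpos,
      hlog _ _ hbpos hbpos, binEnt]
    ring
  constructor
  · intro x y u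
    cases x <;> cases y <;> cases u <;>
      simp only [FinPMF.pr, Fintype.sum_prod_type, Fintype.sum_bool, hμ', Prod.mk.injEq,
        Bool.true_eq_false, Bool.false_eq_true, reduceIte, if_true, if_false,
        and_true, and_false, true_and, false_and] <;> ring
  · show μ.H (fun z => (z.1, z.2.1)) + μ.H (fun z => z.2.2)
      - μ.H (fun ω => ((ω.1, ω.2.1), ω.2.2)) = 1 + binEnt a - 2 * binEnt b
    rw [HXY, HU, HXYU]
    ring
end

section
/- Let n ≥ 1, let p be a distribution of (X^n, Y^n, M) with X^n, Y^n valued in finite sets 𝒳^n, 𝒴^n, and let q be a distribution on 𝒳 × 𝒴 with ‖p_{X^n,Y^n} − q^{(n)}‖_TV ≤ ε ≤ 1/4. Then H(M) ≥ Σ_{i=1}^n [ I(X_i, Y_i; M, X^{i-1}, Y^{i-1}) ] − n·ε', where ε' = 2(2ε log(|𝒳||𝒴|) + h(2ε)) depends only on ε, |𝒳|, |𝒴| and satisfies ε' → 0 as ε → 0. -/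
open scoped BigOperators

namespace FinPMFaux
open Real Finset
variable {Ω : Type*} [Fintype Ω]
lemma pr_nonneg (μ : FinPMF Ω) {A : Type*} [DecidableEq A] (X : Ω → A) (a : A) :
    0 ≤ μ.pr X a :=
  Finset.sum_nonneg fun ω _ => by split <;> simp [μ.nonneg ω]

lemma sum_pr (μ : FinPMF Ω) {A : Type*} [Fintype A] [DecidableEq A] (X : Ω → A) :
    ∑ a, μ.pr X a = 1 := by
  rw [← μ.sum_one]
  unfold FinPMF.pr
  rw [Finset.sum_comm]
  refine Finset.sum_congr rfl fun ω _ => ?_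
  simp

lemma pr_le_one (μ : FinPMF Ω) {A : Type*} [Fintype A] [DecidableEq A] (X : Ω → A) (a : A) :
    μ.pr X a ≤ 1 := by
  rw [← sum_pr μ X]
  exact Finset.single_le_sum (fun b _ => pr_nonneg μ X b) (mem_univ a)

lemma pr_congr (μ : FinPMF Ω) {A : Type*} [DecidableEq A] {X X' : Ω → A}
    (h : ∀ ω, X ω = X' ω) (a : A) : μ.pr X a = μ.pr X' a := by
  unfold FinPMF.pr; exact Finset.sum_congr rfl fun ω _ => by rw [h]

lemma pr_comp (μ : FinPMF Ω) {A B : Type*} [Fintype A] [DecidableEq A] [DecidableEq B]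
    (X : Ω → A) (f : A → B) (b : B) :
    μ.pr (fun ω => f (X ω)) b = ∑ a, if f a = b then μ.pr X a else 0 := by
  unfold FinPMF.pr
  have h1 : ∀ a, (if f a = b then ∑ ω, if X ω = a then μ.p ω else 0 else 0)
      = ∑ ω, if X ω = a then (if f a = b then μ.p ω else 0) else 0 := by
    intro a; split
    · exact Finset.sum_congr rfl fun ω _ => by split <;> simp [*]
    · simp
  simp only [h1]
  rw [Finset.sum_comm]
  refine Finset.sum_congr rfl fun ω _ => ?_
  rw [Finset.sum_ite_eq]
  simp

lemma exists_of_pr_ne_zero (μ : FinPMF Ω) {A : Type*} [DecidableEq A] {X : Ω → A} {a : A}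
    (h : μ.pr X a ≠ 0) : ∃ ω, X ω = a := by
  by_contra hc
  push_neg at hc
  apply h
  unfold FinPMF.pr
  exact Finset.sum_eq_zero fun ω _ => by simp [hc ω]

/-- entropy in nats -/
noncomputable def ent {A : Type*} [Fintype A] (p : A → ℝ) : ℝ := ∑ a, negMulLog (p a)

noncomputable def Hn (μ : FinPMF Ω) {A : Type*} [Fintype A] [DecidableEq A] (X : Ω → A) : ℝ :=
  ent (μ.pr X)

lemma Hn_congr (μ : FinPMF Ω) {A : Type*} [Fintype A] [DecidableEq A] {X X' : Ω → A}
    (h : ∀ ω, X ω = X' ω) : Hn μ X = Hn μ X' := by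
  unfold Hn ent; exact Finset.sum_congr rfl fun a _ => by rw [pr_congr μ h]

/-- data processing: entropy of a function of X is at most entropy of X -/
lemma Hn_comp_le (μ : FinPMF Ω) {A B : Type*} [Fintype A] [DecidableEq A]
    [Fintype B] [DecidableEq B] (X : Ω → A) (f : A → B) :
    Hn μ (fun ω => f (X ω)) ≤ Hn μ X := by
  unfold Hn ent
  have key : ∀ b, negMulLog (μ.pr (fun ω => f (X ω)) b)
      ≤ ∑ a ∈ univ.filter (fun a => f a = b), negMulLog (μ.pr X a) := by
    intro b
    have hPb : μ.pr (fun ω => f (X ω)) b = ∑ a ∈ univ.filter (fun a => f a = b), μ.pr X a := by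
      rw [pr_comp μ X f b, Finset.sum_filter]
    rw [hPb]
    set s := univ.filter (fun a => f a = b) with hs
    set P := ∑ a ∈ s, μ.pr X a with hP
    have hfor : ∀ a ∈ s, μ.pr X a * (-Real.log P) ≤ negMulLog (μ.pr X a) := by
      intro a ha
      rcases (pr_nonneg μ X a).eq_or_lt with h0 | hpos
      · rw [← h0]; simp
      · rw [negMulLog, neg_mul, ← mul_neg]
        apply mul_le_mul_of_nonneg_left _ (le_of_lt hpos)
        apply neg_le_neg
        apply Real.log_le_log hpos
        exact Finset.single_le_sum (fun b _ => pr_nonneg μ X b) ha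
    calc negMulLog P = ∑ a ∈ s, μ.pr X a * (-Real.log P) := by
          rw [negMulLog, ← Finset.sum_mul, ← hP]; ring
      _ ≤ ∑ a ∈ s, negMulLog (μ.pr X a) := Finset.sum_le_sum hfor
  calc ∑ b, negMulLog (μ.pr (fun ω => f (X ω)) b)
      ≤ ∑ b, ∑ a ∈ univ.filter (fun a => f a = b), negMulLog (μ.pr X a) :=
        Finset.sum_le_sum fun b _ => key b
    _ = ∑ a, negMulLog (μ.pr X a) := Finset.sum_fiberwise _ _ _


variable {Ω : Type*} [Fintype Ω]

/-- recoding invariance: if `X'` is a function of `X` and vice versa (pointwise on the sample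
space), then they have the same entropy. -/
lemma Hn_comp_eq (μ : FinPMF Ω) {A B : Type*} [Fintype A] [DecidableEq A]
    [Fintype B] [DecidableEq B] (X : Ω → A) (X' : Ω → B) (f : A → B) (g : B → A)
    (hf : ∀ ω, f (X ω) = X' ω) (hg : ∀ ω, g (X' ω) = X ω) :
    Hn μ X' = Hn μ X := by
  have hfa : ∀ a, μ.pr X a ≠ 0 → (μ.pr X' (f a) = μ.pr X a ∧ g (f a) = a) := by
    intro a ha
    obtain ⟨ω₀, hω₀⟩ := exists_of_pr_ne_zero μ ha
    have hginv : g (f a) = a := by rw [← hω₀, hf, hg]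
    refine ⟨?_, hginv⟩
    have : μ.pr X' (f a) = μ.pr (fun ω => f (X ω)) (f a) :=
      (pr_congr μ (fun ω => (hf ω)) (f a)).symm
    rw [this, pr_comp μ X f (f a), Finset.sum_eq_single a]
    · simp
    · intro a' _ ha'
      by_cases hz : μ.pr X a' = 0
      · simp [hz]
      · obtain ⟨ω₁, hω₁⟩ := exists_of_pr_ne_zero μ hz
        have : g (f a') = a' := by rw [← hω₁, hf, hg]
        by_cases hfa' : f a' = f a
        · exact absurd (by rw [← this, hfa', hginv]) ha'
        · simp [hfa']
    · simp
  have hgb : ∀ b, μ.pr X' b ≠ 0 → (μ.pr X (g b) = μ.pr X' b ∧ f (g b) = b) := by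
    intro b hb
    obtain ⟨ω₀, hω₀⟩ := exists_of_pr_ne_zero μ hb
    have hginv : f (g b) = b := by rw [← hω₀, hg, hf]
    refine ⟨?_, hginv⟩
    have : μ.pr X (g b) = μ.pr (fun ω => g (X' ω)) (g b) :=
      (pr_congr μ (fun ω => (hg ω)) (g b)).symm
    rw [this, pr_comp μ X' g (g b), Finset.sum_eq_single b]
    · simp
    · intro b' _ hb'
      by_cases hz : μ.pr X' b' = 0
      · simp [hz]
      · obtain ⟨ω₁, hω₁⟩ := exists_of_pr_ne_zero μ hz
        have : f (g b') = b' := by rw [← hω₁, hg, hf]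
        by_cases hgb' : g b' = g b
        · exact absurd (by rw [← this, hgb', hginv]) hb'
        · simp [hgb']
    · simp
  unfold Hn ent
  have lhs' : ∑ b, negMulLog (μ.pr X' b)
      = ∑ b ∈ univ.filter (fun b => μ.pr X' b ≠ 0), negMulLog (μ.pr X' b) :=
    (Finset.sum_subset (Finset.filter_subset _ _) (fun b _ hb => by
      simp only [Finset.mem_filter, Finset.mem_univ, true_and, not_not] at hb
      simp [hb])).symm
  have rhs' : ∑ a, negMulLog (μ.pr X a)
      = ∑ a ∈ univ.filter (fun a => μ.pr X a ≠ 0), negMulLog (μ.pr X a) :=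
    (Finset.sum_subset (Finset.filter_subset _ _) (fun a _ ha => by
      simp only [Finset.mem_filter, Finset.mem_univ, true_and, not_not] at ha
      simp [ha])).symm
  rw [lhs', rhs']
  refine Finset.sum_nbij' g f ?_ ?_ ?_ ?_ ?_
  · intro b hb
    simp only [Finset.mem_filter, Finset.mem_univ, true_and] at hb ⊢
    rw [(hgb b hb).1]; exact hb
  · intro a ha
    simp only [Finset.mem_filter, Finset.mem_univ, true_and] at ha ⊢
    rw [(hfa a ha).1]; exact ha
  · intro b hb
    simp only [Finset.mem_filter, Finset.mem_univ, true_and] at hb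
    exact (hgb b hb).2
  · intro a ha
    simp only [Finset.mem_filter, Finset.mem_univ, true_and] at ha
    exact (hfa a ha).2
  · intro b hb
    simp only [Finset.mem_filter, Finset.mem_univ, true_and] at hb
    rw [(hgb b hb).1]



lemma negMulLog_subadd {y d : ℝ} (hy : 0 ≤ y) (hd : 0 ≤ d) :
    negMulLog (y + d) ≤ negMulLog y + negMulLog d := by
  rcases hy.eq_or_lt with h | hy'
  · simp [← h]
  rcases hd.eq_or_lt with h | hd'
  · simp [← h]
  have h1 : negMulLog (y + d) = y * (-Real.log (y + d)) + d * (-Real.log (y + d)) := by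
    rw [negMulLog]; ring
  rw [h1, negMulLog, negMulLog]
  have hyd : 0 < y + d := by linarith
  have e1 : y * (-Real.log (y + d)) ≤ -y * Real.log y := by
    have := Real.log_le_log hy' (by linarith : y ≤ y + d)
    nlinarith
  have e2 : d * (-Real.log (y + d)) ≤ -d * Real.log d := by
    have := Real.log_le_log hd' (by linarith : d ≤ y + d)
    nlinarith
  linarith

lemma negMulLog_dec {y d : ℝ} (hy : 0 ≤ y) (hd : 0 ≤ d) (hyd : y + d ≤ 1) :
    negMulLog y - negMulLog (y + d) ≤ d := by
  rcases hy.eq_or_lt with h | hy'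
  · simp only [← h, negMulLog_zero, zero_add]
    have := negMulLog_nonneg hd (by linarith)
    linarith
  have hydpos : 0 < y + d := by linarith
  have hlogyd : Real.log (y + d) ≤ 0 := Real.log_nonpos (by linarith) hyd
  have key : Real.log (y + d) - Real.log y ≤ d / y := by
    rw [← Real.log_div (by linarith) (ne_of_gt hy')]
    have := Real.log_le_sub_one_of_pos (show 0 < (y+d)/y from div_pos hydpos hy')
    have : Real.log ((y+d)/y) ≤ (y+d)/y - 1 := this
    have hq : (y+d)/y - 1 = d / y := by field_simp; ring
    linarith
  have : y * (Real.log (y + d) - Real.log y) ≤ d := by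
    calc y * (Real.log (y + d) - Real.log y) ≤ y * (d / y) :=
          mul_le_mul_of_nonneg_left key hy
      _ = d := by field_simp
  rw [negMulLog, negMulLog]
  nlinarith [mul_nonpos_of_nonneg_of_nonpos hd hlogyd]

lemma sum_negMulLog_le {A : Type*} [Fintype A] [Nonempty A] (u : A → ℝ) (hu : ∀ a, 0 ≤ u a) :
    ∑ a, negMulLog (u a) ≤ (Fintype.card A : ℝ) * negMulLog ((∑ a, u a) / (Fintype.card A : ℝ)) := by
  have hc : (0 : ℝ) < (Fintype.card A : ℝ) := by
    exact_mod_cast Fintype.card_pos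
  have jensen := Real.concaveOn_negMulLog.le_map_sum (t := univ)
    (w := fun _ : A => (Fintype.card A : ℝ)⁻¹) (p := u)
    (fun _ _ => by positivity)
    (by
      simp only [Finset.sum_const, Finset.card_univ, nsmul_eq_mul]
      field_simp)
    (fun a _ => Set.mem_Ici.2 (hu a))
  simp only [smul_eq_mul] at jensen
  rw [← Finset.mul_sum, ← Finset.mul_sum] at jensen
  have h2 : (∑ a, u a) / (Fintype.card A : ℝ) = (Fintype.card A : ℝ)⁻¹ * ∑ a, u a := by
    field_simp
  rw [h2]
  calc ∑ a, negMulLog (u a) = (Fintype.card A : ℝ) * ((Fintype.card A:ℝ)⁻¹ * ∑ a, negMulLog (u a)) := by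
        field_simp
    _ ≤ (Fintype.card A : ℝ) * negMulLog ((Fintype.card A : ℝ)⁻¹ * ∑ a, u a) := by
        exact mul_le_mul_of_nonneg_left jensen (le_of_lt hc)



set_option maxHeartbeats 1000000 in
lemma ent_one_sided {A : Type*} [Fintype A] (p r : A → ℝ)
    (hp0 : ∀ a, 0 ≤ p a) (hr0 : ∀ a, 0 ≤ r a)
    (hp1 : ∑ a, p a = 1) (hr1 : ∑ a, r a = 1)
    {ε : ℝ} (hε4 : ε ≤ 1 / 4) (hTV : ∑ a, |p a - r a| ≤ 2 * ε) :
    ent p - ent r ≤ 2 * ε * Real.log (Fintype.card A)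
      + (negMulLog (2 * ε) + negMulLog (1 - 2 * ε)) := by
  have hA : Nonempty A := by
    by_contra h
    rw [not_nonempty_iff] at h
    rw [Finset.sum_eq_zero (fun a _ => (h.false a).elim)] at hp1
    norm_num at hp1
  have hε0 : 0 ≤ ε := by
    have : (0:ℝ) ≤ ∑ a, |p a - r a| := Finset.sum_nonneg fun a _ => abs_nonneg _
    linarith
  have hple : ∀ a, p a ≤ 1 := fun a => by
    rw [← hp1]; exact Finset.single_le_sum (fun b _ => hp0 b) (mem_univ a)
  have hrle : ∀ a, r a ≤ 1 := fun a => by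
    rw [← hr1]; exact Finset.single_le_sum (fun b _ => hr0 b) (mem_univ a)
  set u : A → ℝ := fun a => max (p a - r a) 0 with hu
  set v : A → ℝ := fun a => max (r a - p a) 0 with hv
  have hu0 : ∀ a, 0 ≤ u a := fun a => le_max_right _ _
  have hv0 : ∀ a, 0 ≤ v a := fun a => le_max_right _ _
  set sp : ℝ := ∑ a, u a with hsp
  set sm : ℝ := ∑ a, v a with hsm
  have hsum_eq : sp = sm := by
    have h1 : ∀ a, u a - v a = p a - r a := fun a => by
      simp only [hu, hv]; rcases le_total (p a) (r a) with h | h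
      · rw [max_eq_right (by linarith : p a - r a ≤ 0), max_eq_left (by linarith : (0:ℝ) ≤ r a - p a)]; ring
      · rw [max_eq_left (by linarith : (0:ℝ) ≤ p a - r a), max_eq_right (by linarith : r a - p a ≤ 0)]; ring
    have : sp - sm = ∑ a, (p a - r a) := by
      rw [hsp, hsm, ← Finset.sum_sub_distrib]
      exact Finset.sum_congr rfl fun a _ => h1 a
    rw [Finset.sum_sub_distrib, hp1, hr1] at this
    linarith
  have habs : ∀ a, u a + v a = |p a - r a| := fun a => by
    simp only [hu, hv]; rcases le_total (p a) (r a) with h | h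
    · rw [max_eq_right (by linarith : p a - r a ≤ 0), max_eq_left (by linarith : (0:ℝ) ≤ r a - p a), abs_of_nonpos (by linarith)]; ring
    · rw [max_eq_left (by linarith : (0:ℝ) ≤ p a - r a), max_eq_right (by linarith : r a - p a ≤ 0), abs_of_nonneg (by linarith)]; ring
  have hs_sum : sp + sm ≤ 2 * ε := by
    have : sp + sm = ∑ a, |p a - r a| := by
      rw [hsp, hsm, ← Finset.sum_add_distrib]
      exact Finset.sum_congr rfl fun a _ => habs a
    linarith
  have hsε : sp ≤ ε := by linarith [hsum_eq]
  have hs0 : 0 ≤ sp := Finset.sum_nonneg fun a _ => hu0 a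
  -- step 1: pointwise bound
  have step1 : ent p - ent r ≤ (∑ a, negMulLog (u a)) + sm := by
    rw [ent, ent, ← Finset.sum_sub_distrib, hsm, ← Finset.sum_add_distrib]
    refine Finset.sum_le_sum fun a _ => ?_
    rcases le_total (r a) (p a) with h | h
    · have hua : u a = p a - r a := max_eq_left (by linarith)
      have hva : v a = 0 := max_eq_right (by linarith)
      have := negMulLog_subadd (hr0 a) (show 0 ≤ p a - r a by linarith)
      rw [hua, hva]
      have hra : r a + (p a - r a) = p a := by ring
      rw [hra] at this
      linarith
    · have hua : u a = 0 := max_eq_right (by linarith)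
      have hva : v a = r a - p a := max_eq_left (by linarith)
      have := negMulLog_dec (hp0 a) (show 0 ≤ r a - p a by linarith)
        (show p a + (r a - p a) ≤ 1 by rw [add_sub_cancel]; exact hrle a)
      rw [add_sub_cancel] at this
      rw [hua, hva, negMulLog_zero]
      linarith
  -- RHS nonneg facts
  have h2ε1 : 2 * ε ≤ 1 := by linarith
  have hcard1 : (1:ℝ) ≤ (Fintype.card A : ℝ) := by
    exact_mod_cast Fintype.card_pos
  have hlogc : 0 ≤ Real.log (Fintype.card A) := Real.log_nonneg hcard1
  rcases hs0.eq_or_lt with hz | hpos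
  · -- sp = 0 : then p = r
    have hall : ∀ a, u a = 0 := by
      intro a
      have := (Finset.sum_eq_zero_iff_of_nonneg (fun a _ => hu0 a)).1 hz.symm a (mem_univ a)
      exact this
    have hallv : ∀ a, v a = 0 := by
      intro a
      have hzm : sm = 0 := by rw [← hsum_eq, ← hz]
      exact (Finset.sum_eq_zero_iff_of_nonneg (fun a _ => hv0 a)).1 hzm a (mem_univ a)
    have hpr : ∀ a, p a = r a := by
      intro a
      have e1 : p a - r a ≤ u a := le_max_left _ _
      have e2 : r a - p a ≤ v a := le_max_left _ _
      rw [hall a] at e1; rw [hallv a] at e2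
      linarith
    have : ent p = ent r := by
      unfold ent; exact Finset.sum_congr rfl fun a _ => by rw [hpr a]
    rw [this]
    have := negMulLog_nonneg (by linarith : (0:ℝ) ≤ 2*ε) h2ε1
    have := negMulLog_nonneg (by linarith : (0:ℝ) ≤ 1 - 2*ε) (by linarith)
    nlinarith
  · -- sp > 0
    have hεpos : 0 < ε := lt_of_lt_of_le hpos hsε
    -- Jensen
    have jensen := sum_negMulLog_le u hu0
    have hcpos : (0:ℝ) < (Fintype.card A : ℝ) := by exact_mod_cast Fintype.card_pos
    have hcomp : (Fintype.card A : ℝ) * negMulLog (sp / (Fintype.card A : ℝ))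
        = sp * Real.log (Fintype.card A) + negMulLog sp := by
      simp only [negMulLog]
      rw [Real.log_div (ne_of_gt hpos) (ne_of_gt hcpos)]
      field_simp
      ring
    rw [← hsp, hcomp] at jensen
    -- card ≥ 2
    have hcard2 : (2:ℝ) ≤ (Fintype.card A : ℝ) := by
      have hexu : ∃ a, 0 < u a := by
        by_contra hno
        push_neg at hno
        have : sp = 0 := le_antisymm (Finset.sum_nonpos fun a _ => hno a) hs0
        linarith
      have hexv : ∃ a, 0 < v a := by
        by_contra hno
        push_neg at hno
        have : sm = 0 := le_antisymm (Finset.sum_nonpos fun a _ => hno a)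
          (Finset.sum_nonneg fun a _ => hv0 a)
        rw [← hsum_eq] at this; linarith
      obtain ⟨a, ha⟩ := hexu
      obtain ⟨b, hb⟩ := hexv
      have hab : a ≠ b := by
        intro h
        subst h
        simp only [hu, hv, lt_max_iff] at ha hb
        rcases ha with h1 | h1 <;> rcases hb with h2 | h2 <;> linarith
      have : 1 < Fintype.card A := Fintype.one_lt_card_iff.2 ⟨a, b, hab⟩
      exact_mod_cast this
    have hlog2c : Real.log 2 ≤ Real.log (Fintype.card A) :=
      Real.log_le_log (by norm_num) hcard2
    -- monotone: negMulLog s + s ≤ negMulLog ε + ε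
    have hmono : negMulLog sp + sp ≤ negMulLog ε + ε := by
      have hlratio : Real.log sp - Real.log ε ≥ 1 - ε / sp := by
        rw [← Real.log_div (ne_of_gt hpos) (ne_of_gt hεpos)]
        have h1 := Real.log_le_sub_one_of_pos (show 0 < ε / sp from div_pos hεpos hpos)
        have h2 : Real.log (ε / sp) = - Real.log (sp / ε) := by
          rw [← Real.log_inv]
          congr 1
          field_simp
        rw [h2] at h1
        have : ε / sp - 1 ≥ -(Real.log (sp / ε)) := h1
        linarith
      have h3 : sp - ε ≤ sp * (Real.log sp - Real.log ε) := by
        calc sp - ε = sp * (1 - ε / sp) := by field_simp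
          _ ≤ sp * (Real.log sp - Real.log ε) :=
              mul_le_mul_of_nonneg_left hlratio (le_of_lt hpos)
      have hlogε : Real.log ε ≤ 0 := Real.log_nonpos (le_of_lt hεpos) (by linarith)
      rw [negMulLog, negMulLog]
      nlinarith [mul_le_mul_of_nonneg_right (show sp ≤ ε from hsε) (neg_nonneg.2 hlogε)]
    -- final numeric inequality
    have hfin : negMulLog ε + ε ≤ ε * Real.log 2 + (negMulLog (2*ε) + negMulLog (1-2*ε)) := by
      have hg2ε : negMulLog (2*ε) = -2*ε*Real.log 2 + 2 * negMulLog ε := by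
        rw [negMulLog_mul]
        rw [negMulLog, negMulLog]
        ring
      have hgε : 2 * ε * Real.log 2 ≤ negMulLog ε := by
        rw [negMulLog]
        have h4 : Real.log ε ≤ Real.log (1/4) := Real.log_le_log hεpos hε4
        have : Real.log (1/4) = -(2 * Real.log 2) := by
          rw [one_div, Real.log_inv]
          rw [show (4:ℝ) = 2^2 by norm_num, Real.log_pow]
          push_cast
          ring
        nlinarith
      have hg1 : ε ≤ negMulLog (1 - 2*ε) := by
        have ht : (0:ℝ) < 1 - 2*ε ∨ (1:ℝ) - 2*ε = 0 := by
          rcases lt_or_eq_of_le (show 2*ε ≤ 1 by linarith) with h | h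
          · left; linarith
          · right; linarith
        rcases ht with ht | ht
        · have hlt : Real.log (1-2*ε) ≤ (1-2*ε) - 1 := Real.log_le_sub_one_of_pos ht
          rw [negMulLog]
          nlinarith
        · -- 1 - 2ε = 0 means ε = 1/2 > 1/4, contradiction
          exfalso; linarith [hε4]
      linarith [mul_nonneg hε0 (Real.log_nonneg (by norm_num : (1:ℝ) ≤ 2))]
    calc ent p - ent r ≤ (∑ a, negMulLog (u a)) + sm := step1
      _ ≤ sp * Real.log (Fintype.card A) + negMulLog sp + sp := by
          rw [← hsum_eq]; linarith [jensen]
      _ ≤ ε * Real.log (Fintype.card A) + (negMulLog ε + ε) := by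
          linarith [mul_le_mul_of_nonneg_right hsε hlogc, hmono]
      _ ≤ ε * Real.log (Fintype.card A) + (ε * Real.log 2 + (negMulLog (2*ε) + negMulLog (1-2*ε))) := by
          linarith [hfin]
      _ ≤ 2 * ε * Real.log (Fintype.card A) + (negMulLog (2*ε) + negMulLog (1-2*ε)) := by
          linarith [mul_le_mul_of_nonneg_left hlog2c (le_of_lt hεpos)]



lemma sum_prod_pi {A : Type*} [Fintype A] (q : A → ℝ) (hq1 : ∑ a, q a = 1) (m : ℕ) :
    ∑ h : Fin m → A, ∏ i, q (h i) = 1 := by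
  rw [← Fintype.piFinset_univ, ← Finset.prod_univ_sum]
  simp [hq1]

lemma ent_prod_pow {A : Type*} [Fintype A] (q : A → ℝ) (hq1 : ∑ a, q a = 1) (m : ℕ) :
    ∑ h : Fin m → A, negMulLog (∏ i, q (h i)) = m * (∑ a, negMulLog (q a)) := by
  induction m with
  | zero => simp
  | succ m ih =>
    rw [← Equiv.sum_comp (Fin.consEquiv (fun _ : Fin (m+1) => A))]
    rw [Fintype.sum_prod_type]
    have hterm : ∀ (x : A) (g : Fin m → A),
        negMulLog (∏ i : Fin (m+1), q (Fin.cons (α := fun _ : Fin (m+1) => A) x g i))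
        = (∏ i : Fin m, q (g i)) * negMulLog (q x) + q x * negMulLog (∏ i : Fin m, q (g i)) := by
      intro x g
      rw [Fin.prod_univ_succ]
      simp only [Fin.cons_zero, Fin.cons_succ]
      exact negMulLog_mul _ _
    have : ∀ x : A, ∑ g : Fin m → A, negMulLog (∏ i : Fin (m+1), q (Fin.consEquiv (fun _ => A) (x, g) i))
        = negMulLog (q x) + q x * (m * (∑ a, negMulLog (q a))) := by
      intro x
      have : ∀ g : Fin m → A, (Fin.consEquiv (fun _ : Fin (m+1) => A) (x, g)) = Fin.cons (α := fun _ : Fin (m+1) => A) x g := fun g => rfl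
      simp only [this, hterm]
      rw [Finset.sum_add_distrib, ← Finset.sum_mul, sum_prod_pi q hq1 m, ← Finset.mul_sum, ih]
      ring
    calc ∑ x : A, ∑ g : Fin m → A, negMulLog (∏ i : Fin (m+1), q ((Fin.consEquiv (fun _ => A) (x, g)) i))
        = ∑ x : A, (negMulLog (q x) + q x * (m * (∑ a, negMulLog (q a)))) :=
          Finset.sum_congr rfl fun x _ => this x
      _ = (m+1 : ℕ) * (∑ a, negMulLog (q a)) := by
          rw [Finset.sum_add_distrib, ← Finset.sum_mul, hq1]
          push_cast; ring

lemma marg_prod_pi {A : Type*} [Fintype A] [DecidableEq A] (q : A → ℝ) (hq1 : ∑ a, q a = 1)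
    {m : ℕ} (i : Fin m) (a : A) :
    ∑ h : Fin m → A, (if h i = a then ∏ j, q (h j) else 0) = q a := by
  induction m with
  | zero => exact absurd i.isLt (by omega)
  | succ m ih =>
    rw [← Equiv.sum_comp (Fin.consEquiv (fun _ : Fin (m+1) => A))]
    rw [Fintype.sum_prod_type]
    have hc : ∀ (x : A) (g : Fin m → A), (Fin.consEquiv (fun _ : Fin (m+1) => A) (x, g)) = Fin.cons (α := fun _ : Fin (m+1) => A) x g :=
      fun _ _ => rfl
    simp only [hc]
    rcases Fin.eq_zero_or_eq_succ i with rfl | ⟨j, rfl⟩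
    · simp only [Fin.cons_zero, Fin.prod_univ_succ, Fin.cons_succ]
      have : ∀ x : A, ∑ g : Fin m → A, (if x = a then q x * ∏ j, q (g j) else 0)
          = if x = a then q x else 0 := by
        intro x
        split
        · rw [← Finset.mul_sum, sum_prod_pi q hq1 m, mul_one]
        · simp
      simp only [this]
      simp
    · simp only [Fin.cons_succ, Fin.prod_univ_succ, Fin.cons_zero]
      have : ∀ x : A, ∑ g : Fin m → A, (if g j = a then q x * ∏ j', q (g j') else 0)
          = q x * q a := by
        intro x
        rw [← ih j]
        rw [Finset.mul_sum]
        exact Finset.sum_congr rfl fun g _ => by split <;> simp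
      simp only [this]
      rw [← Finset.sum_mul, hq1, one_mul]


end FinPMFaux

namespace FinPMFaux
open Real Finset
variable {Ω : Type*} [Fintype Ω]

lemma H_eq_Hn (μ : FinPMF Ω) {A : Type*} [Fintype A] [DecidableEq A] (X : Ω → A) :
    μ.H X = Hn μ X / Real.log 2 := by
  have hpt : ∀ x : ℝ, -(x * Real.logb 2 x) = Real.negMulLog x / Real.log 2 := fun x => by
    rw [Real.logb, Real.negMulLog]; ring
  rw [FinPMF.H, Hn, ent, ← Finset.sum_neg_distrib, Finset.sum_div]
  exact Finset.sum_congr rfl fun a _ => hpt _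

end FinPMFaux

set_option maxHeartbeats 2000000 in
open FinPMFaux in
/-- If `‖p_{X^n,Y^n} − q^{(n)}‖_TV ≤ ε ≤ 1/4`, then
`H(M) ≥ ∑ᵢ I(Xᵢ,Yᵢ; M, X^{i-1}, Y^{i-1}) − n ε'` with
`ε' = 2(2ε log₂(|𝒳||𝒴|) + h(2ε))`. -/
theorem stmt14 {Ω 𝒳 𝒴 𝓜 : Type*} [Fintype Ω]
    [Fintype 𝒳] [DecidableEq 𝒳] [Fintype 𝒴] [DecidableEq 𝒴]
    [Fintype 𝓜] [DecidableEq 𝓜] {n : ℕ} (hn : 1 ≤ n)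
    (μ : FinPMF Ω) (Xn : Ω → Fin n → 𝒳) (Yn : Ω → Fin n → 𝒴) (M : Ω → 𝓜)
    (q : 𝒳 × 𝒴 → ℝ) (hq0 : ∀ z, 0 ≤ q z) (hq1 : ∑ z, q z = 1)
    (ε : ℝ) (hε0 : 0 ≤ ε) (hε4 : ε ≤ 1 / 4)
    (hTV : (1 / 2 : ℝ) * ∑ z : (Fin n → 𝒳) × (Fin n → 𝒴),
        |μ.pr (fun ω => (Xn ω, Yn ω)) z - ∏ i, q (z.1 i, z.2 i)| ≤ ε) :
    (∑ i : Fin n,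
        μ.I2 (fun ω => (Xn ω i, Yn ω i))
          (fun ω => (M ω,
            fun j : Fin i.val => Xn ω (Fin.castLE i.isLt.le j),
            fun j : Fin i.val => Yn ω (Fin.castLE i.isLt.le j))))
      - (n : ℝ) * (2 * (2 * ε * Real.logb 2 ((Fintype.card 𝒳 : ℝ) * (Fintype.card 𝒴 : ℝ))
            + binEnt (2 * ε)))
      ≤ μ.H M := by
  classical
  -- nonemptiness
  have hΩ : Nonempty Ω := by
    by_contra h
    rw [not_nonempty_iff] at h
    have := μ.sum_one
    rw [Finset.univ_eq_empty, Finset.sum_empty] at this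
    norm_num at this
  obtain ⟨ω₀⟩ := hΩ
  have h𝒳 : Nonempty 𝒳 := ⟨Xn ω₀ ⟨0, hn⟩⟩
  have h𝒴 : Nonempty 𝒴 := ⟨Yn ω₀ ⟨0, hn⟩⟩
  set x0 : 𝒳 := Classical.arbitrary 𝒳 with hx0
  set y0 : 𝒴 := Classical.arbitrary 𝒴 with hy0
  -- notation
  set L : ℝ := Real.log 2 with hLdef
  have hL : 0 < L := Real.log_pos (by norm_num)
  set c : ℝ := (Fintype.card 𝒳 : ℝ) * (Fintype.card 𝒴 : ℝ) with hcdef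
  set B : ℝ := Real.negMulLog (2*ε) + Real.negMulLog (1-2*ε) with hBdef
  set J : Ω → (Fin n → 𝒳) × (Fin n → 𝒴) := fun ω => (Xn ω, Yn ω) with hJdef
  set qn : (Fin n → 𝒳) × (Fin n → 𝒴) → ℝ := fun z => ∏ i, q (z.1 i, z.2 i) with hqndef
  set W : Fin n → Ω → 𝒳 × 𝒴 := fun i ω => (Xn ω i, Yn ω i) with hWdef
  set Z : (i : Fin n) → Ω → 𝓜 × (Fin i.val → 𝒳) × (Fin i.val → 𝒴) :=
    fun i ω => (M ω,
      fun j : Fin i.val => Xn ω (Fin.castLE i.isLt.le j),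
      fun j : Fin i.val => Yn ω (Fin.castLE i.isLt.le j)) with hZdef
  set V : ℕ → Ω → 𝓜 × (Fin n → Option 𝒳) × (Fin n → Option 𝒴) := fun k ω =>
    (M ω, fun j => if (j:ℕ) < k then some (Xn ω j) else none,
          fun j => if (j:ℕ) < k then some (Yn ω j) else none) with hVdef
  set T : ℕ → ℝ := fun k => Hn μ (V k) with hTdef
  set MXY : Ω → 𝓜 × (Fin n → 𝒳) × (Fin n → 𝒴) := fun ω => (M ω, Xn ω, Yn ω) with hMXYdef
  -- recodings
  have hT0 : T 0 = Hn μ M := by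
    apply Hn_comp_eq μ M (V 0) (fun m => (m, fun _ => none, fun _ => none)) (fun s => s.1)
    · intro ω
      simp only [hVdef]
      refine Prod.ext rfl (Prod.ext ?_ ?_) <;> · funext j; simp
    · intro ω; rfl
  have hTn : T n = Hn μ MXY := by
    apply Hn_comp_eq μ MXY (V n)
      (fun t => (t.1, fun j => some (t.2.1 j), fun j => some (t.2.2 j)))
      (fun s => (s.1, fun j => (s.2.1 j).getD x0, fun j => (s.2.2 j).getD y0))
    · intro ω
      simp only [hVdef, hMXYdef]
      refine Prod.ext rfl (Prod.ext ?_ ?_) <;> · funext j; simp [j.isLt]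
    · intro ω
      simp only [hVdef, hMXYdef]
      refine Prod.ext rfl (Prod.ext ?_ ?_) <;> · funext j; simp [j.isLt]
  have hTZ : ∀ i : Fin n, Hn μ (Z i) = T i.val := by
    intro i
    refine (Hn_comp_eq μ (Z i) (V i.val)
      (fun t => (t.1,
        fun j => if h : (j:ℕ) < i.val then some (t.2.1 ⟨(j:ℕ), h⟩) else none,
        fun j => if h : (j:ℕ) < i.val then some (t.2.2 ⟨(j:ℕ), h⟩) else none))
      (fun s => (s.1,
        fun j : Fin i.val => (s.2.1 (Fin.castLE i.isLt.le j)).getD x0,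
        fun j : Fin i.val => (s.2.2 (Fin.castLE i.isLt.le j)).getD y0)) ?_ ?_).symm
    · intro ω
      simp only [hVdef, hZdef]
      refine Prod.ext rfl (Prod.ext ?_ ?_) <;>
      · funext j
        by_cases h : (j:ℕ) < i.val
        · have hcast : (Fin.castLE i.isLt.le ⟨(j:ℕ), h⟩ : Fin n) = j := Fin.ext (by simp)
          simp only [dif_pos h, if_pos h, hcast]
        · simp only [dif_neg h, if_neg h]
    · intro ω
      simp only [hVdef, hZdef]
      refine Prod.ext rfl (Prod.ext ?_ ?_) <;>
      · funext j
        have hj : ((j:ℕ)) < i.val := j.isLt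
        simp [hj]
  have hTWZ : ∀ i : Fin n, Hn μ (fun ω => (W i ω, Z i ω)) = T (i.val + 1) := by
    intro i
    refine (Hn_comp_eq μ (fun ω => (W i ω, Z i ω)) (V (i.val + 1))
      (fun t => (t.2.1,
        fun j => if h : (j:ℕ) < i.val then some (t.2.2.1 ⟨(j:ℕ), h⟩)
          else if (j:ℕ) = i.val then some t.1.1 else none,
        fun j => if h : (j:ℕ) < i.val then some (t.2.2.2 ⟨(j:ℕ), h⟩)
          else if (j:ℕ) = i.val then some t.1.2 else none))
      (fun s => (((s.2.1 i).getD x0, (s.2.2 i).getD y0),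
        (s.1,
         fun j : Fin i.val => (s.2.1 (Fin.castLE i.isLt.le j)).getD x0,
         fun j : Fin i.val => (s.2.2 (Fin.castLE i.isLt.le j)).getD y0))) ?_ ?_).symm
    · intro ω
      simp only [hVdef, hZdef, hWdef]
      refine Prod.ext rfl (Prod.ext ?_ ?_) <;>
      · funext j
        by_cases h : (j:ℕ) < i.val
        · have hcast : (Fin.castLE i.isLt.le ⟨(j:ℕ), h⟩ : Fin n) = j := Fin.ext (by simp)
          simp only [dif_pos h, if_pos (by omega : (j:ℕ) < i.val + 1), hcast]
        · by_cases h2 : (j:ℕ) = i.val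
          · simp only [dif_neg h]
            rw [if_pos h2, if_pos (show (j:ℕ) < i.val + 1 by omega), Fin.ext h2]
          · simp only [dif_neg h, if_neg h2, if_neg (by omega : ¬ ((j:ℕ) < i.val + 1))]
    · intro ω
      simp only [hVdef, hZdef, hWdef]
      refine Prod.ext (Prod.ext ?_ ?_) (Prod.ext rfl (Prod.ext ?_ ?_))
      · simp [show (i:ℕ) < i.val + 1 by omega]
      · simp [show (i:ℕ) < i.val + 1 by omega]
      all_goals
      · funext j
        have hj : ((j:ℕ)) < i.val + 1 := by have := j.isLt; omega
        simp [hj]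
  -- telescoping
  have htel : ∑ i : Fin n, (T (i.val + 1) - T i.val) = T n - T 0 := by
    rw [Fin.sum_univ_eq_sum_range (fun k => T (k+1) - T k) n]
    exact Finset.sum_range_sub T n
  -- monotonicity
  have hJle : Hn μ J ≤ Hn μ MXY := by
    have h1 := Hn_comp_le μ MXY (fun t => t.2)
    have he : Hn μ (fun ω => (fun t : 𝓜 × (Fin n → 𝒳) × (Fin n → 𝒴) => t.2) (MXY ω)) = Hn μ J :=
      Hn_congr μ (fun ω => rfl)
    rw [he] at h1
    exact h1
  -- q-side facts
  set e𝒳𝒴 := Equiv.arrowProdEquivProdArrow (Fin n) (fun _ => 𝒳) (fun _ => 𝒴) with hedef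
  have hqe : ∀ h : Fin n → 𝒳 × 𝒴, qn (e𝒳𝒴 h) = ∏ i, q (h i) := by
    intro h
    simp only [hqndef, hedef, Equiv.arrowProdEquivProdArrow]
    exact Finset.prod_congr rfl fun i _ => rfl
  have hqn0 : ∀ z, 0 ≤ qn z := fun z => Finset.prod_nonneg fun i _ => hq0 _
  have hqn1 : ∑ z, qn z = 1 := by
    rw [← Equiv.sum_comp e𝒳𝒴 qn, Finset.sum_congr rfl fun h _ => hqe h]
    exact sum_prod_pi q hq1 n
  have hentqn : ent qn = (n:ℝ) * ent q := by
    rw [ent, ← Equiv.sum_comp e𝒳𝒴 (fun z => Real.negMulLog (qn z)),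
      Finset.sum_congr rfl fun h _ => by rw [hqe h]]
    exact ent_prod_pow q hq1 n
  have hmarg : ∀ (i : Fin n) (a : 𝒳 × 𝒴), (∑ z, if (z.1 i, z.2 i) = a then qn z else 0) = q a := by
    intro i a
    rw [← Equiv.sum_comp e𝒳𝒴 (fun z => if (z.1 i, z.2 i) = a then qn z else 0)]
    have h2 : ∀ h : Fin n → 𝒳 × 𝒴,
        (if ((e𝒳𝒴 h).1 i, (e𝒳𝒴 h).2 i) = a then qn (e𝒳𝒴 h) else 0)
        = (if h i = a then ∏ j, q (h j) else 0) := by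
      intro h
      rw [hqe h, show ((e𝒳𝒴 h).1 i, (e𝒳𝒴 h).2 i) = h i from rfl]
    rw [Finset.sum_congr rfl fun h _ => h2 h]
    exact marg_prod_pi q hq1 i a
  -- TV facts
  have hTVJ : ∑ z, |μ.pr J z - qn z| ≤ 2 * ε := by
    have h1 : (1 / 2 : ℝ) * ∑ z, |μ.pr J z - qn z| ≤ ε := hTV
    linarith
  have hTVW : ∀ i : Fin n, ∑ a, |μ.pr (W i) a - q a| ≤ 2 * ε := by
    intro i
    have hWcomp : ∀ a, μ.pr (W i) a = ∑ z, if (z.1 i, z.2 i) = a then μ.pr J z else 0 := by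
      intro a
      have h1 : μ.pr (W i) a
          = μ.pr (fun ω => ((fun z : (Fin n → 𝒳) × (Fin n → 𝒴) => (z.1 i, z.2 i)) (J ω))) a :=
        pr_congr μ (fun ω => rfl) a
      rw [h1]
      exact pr_comp μ J (fun z => (z.1 i, z.2 i)) a
    calc ∑ a, |μ.pr (W i) a - q a|
        = ∑ a, |∑ z, ((if (z.1 i, z.2 i) = a then μ.pr J z else 0)
            - (if (z.1 i, z.2 i) = a then qn z else 0))| := by
          refine Finset.sum_congr rfl fun a _ => ?_
          rw [hWcomp a, ← hmarg i a, ← Finset.sum_sub_distrib]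
      _ ≤ ∑ a, ∑ z, |((if (z.1 i, z.2 i) = a then μ.pr J z else 0)
            - (if (z.1 i, z.2 i) = a then qn z else 0))| :=
          Finset.sum_le_sum fun a _ => Finset.abs_sum_le_sum_abs _ _
      _ = ∑ z, ∑ a, (if (z.1 i, z.2 i) = a then |μ.pr J z - qn z| else 0) := by
          rw [Finset.sum_comm]
          refine Finset.sum_congr rfl fun z _ => Finset.sum_congr rfl fun a _ => ?_
          split <;> simp
      _ = ∑ z, |μ.pr J z - qn z| := by
          refine Finset.sum_congr rfl fun z _ => ?_
          rw [Finset.sum_ite_eq]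
          simp
      _ ≤ 2 * ε := hTVJ
  -- cardinality facts
  have hcard𝒳 : (1:ℝ) ≤ (Fintype.card 𝒳 : ℝ) := by exact_mod_cast Fintype.card_pos
  have hcard𝒴 : (1:ℝ) ≤ (Fintype.card 𝒴 : ℝ) := by exact_mod_cast Fintype.card_pos
  have hc1 : (1:ℝ) ≤ c := by rw [hcdef]; nlinarith
  have hlogc0 : 0 ≤ Real.log c := Real.log_nonneg hc1
  have hB0 : 0 ≤ B := by
    rw [hBdef]
    have h1 := Real.negMulLog_nonneg (by linarith : (0:ℝ) ≤ 2*ε) (by linarith : 2*ε ≤ 1)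
    have h2 := Real.negMulLog_nonneg (by linarith : (0:ℝ) ≤ 1-2*ε) (by linarith : 1-2*ε ≤ 1)
    linarith
  have hcardA : ((Fintype.card (𝒳 × 𝒴) : ℝ)) = c := by
    rw [hcdef, Fintype.card_prod]; push_cast; ring
  have hcardBig : Real.log ((Fintype.card ((Fin n → 𝒳) × (Fin n → 𝒴)) : ℝ)) = (n:ℝ) * Real.log c := by
    have h1 : Fintype.card ((Fin n → 𝒳) × (Fin n → 𝒴))
        = (Fintype.card 𝒳 * Fintype.card 𝒴)^n := by
      rw [Fintype.card_prod, Fintype.card_fun, Fintype.card_fun, Fintype.card_fin, mul_pow]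
    rw [h1, hcdef]
    push_cast
    rw [Real.log_pow]
  -- entropy continuity applications
  have hW7 : ∀ i : Fin n, Hn μ (W i) ≤ ent q + (2*ε*Real.log c + B) := by
    intro i
    have happ := ent_one_sided (μ.pr (W i)) q (pr_nonneg μ (W i)) hq0
      (sum_pr μ (W i)) hq1 hε4 (hTVW i)
    rw [hcardA, ← hBdef] at happ
    unfold Hn
    linarith
  have hJ8 : (n:ℝ) * ent q - (2*ε*((n:ℝ)*Real.log c) + B) ≤ Hn μ J := by
    have hTVJ' : ∑ z, |qn z - μ.pr J z| ≤ 2*ε := by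
      rw [show (∑ z, |qn z - μ.pr J z|) = ∑ z, |μ.pr J z - qn z| from
        Finset.sum_congr rfl fun z _ => abs_sub_comm _ _]
      exact hTVJ
    have happ := ent_one_sided qn (μ.pr J) hqn0 (pr_nonneg μ J) hqn1
      (sum_pr μ J) hε4 hTVJ'
    rw [hcardBig, ← hBdef, hentqn] at happ
    unfold Hn
    linarith
  -- key inequality in nats
  have hn1 : (1:ℝ) ≤ (n:ℝ) := by exact_mod_cast hn
  have hnB : B ≤ (n:ℝ) * B := by nlinarith
  have hsumZ : ∑ i : Fin n, (Hn μ (Z i) - Hn μ (fun ω => (W i ω, Z i ω)))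
      = Hn μ M - Hn μ MXY := by
    rw [Finset.sum_congr rfl fun i (_ : i ∈ Finset.univ) =>
      (show Hn μ (Z i) - Hn μ (fun ω => (W i ω, Z i ω)) = -(T (i.val+1) - T i.val) by
        rw [hTZ i, hTWZ i]; ring)]
    rw [Finset.sum_neg_distrib, htel, hT0, hTn]
    ring
  have hWsum : ∑ i : Fin n, Hn μ (W i) ≤ (n:ℝ) * (ent q + (2*ε*Real.log c + B)) := by
    calc ∑ i : Fin n, Hn μ (W i) ≤ ∑ _i : Fin n, (ent q + (2*ε*Real.log c + B)) :=
          Finset.sum_le_sum fun i _ => hW7 i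
      _ = (n:ℝ) * (ent q + (2*ε*Real.log c + B)) := by
          rw [Finset.sum_const, Finset.card_univ, Fintype.card_fin, nsmul_eq_mul]
  have key : (∑ i : Fin n, (Hn μ (W i) + (Hn μ (Z i) - Hn μ (fun ω => (W i ω, Z i ω)))))
      - (n:ℝ) * (2*(2*ε*Real.log c + B)) ≤ Hn μ M := by
    rw [Finset.sum_add_distrib, hsumZ]
    linarith [hWsum, hJ8, hJle, hnB]
  -- final conversion from nats to bits
  have hIi : ∀ i : Fin n, μ.I2 (W i) (Z i)
      = (Hn μ (W i) + (Hn μ (Z i) - Hn μ (fun ω => (W i ω, Z i ω)))) / L := by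
    intro i
    rw [FinPMF.I2, H_eq_Hn, H_eq_Hn, H_eq_Hn, ← hLdef]
    ring
  have hbin : binEnt (2*ε) = B / L := by
    rw [hBdef, binEnt, hLdef, Real.logb, Real.logb, Real.negMulLog, Real.negMulLog]
    ring
  have hlogb : Real.logb 2 c = Real.log c / L := by rw [Real.logb, hLdef]
  show (∑ i : Fin n, μ.I2 (W i) (Z i))
      - (n:ℝ) * (2*(2*ε*Real.logb 2 c + binEnt (2*ε))) ≤ μ.H M
  rw [Finset.sum_congr rfl fun i (_ : i ∈ Finset.univ) => hIi i, ← Finset.sum_div,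
    H_eq_Hn μ M, ← hLdef, hbin, hlogb]
  calc (∑ i : Fin n, (Hn μ (W i) + (Hn μ (Z i) - Hn μ (fun ω => (W i ω, Z i ω))))) / L
        - (n:ℝ) * (2*(2*ε*(Real.log c / L) + B / L))
      = ((∑ i : Fin n, (Hn μ (W i) + (Hn μ (Z i) - Hn μ (fun ω => (W i ω, Z i ω)))))
        - (n:ℝ) * (2*(2*ε*Real.log c + B))) / L := by ring
    _ ≤ Hn μ M / L := by
        gcongr
end

section
/- Let a ∈ (0, 1/2), b = (1 − √(1−2a))/2, and for t ∈ [0,1] let α(t) = (1−t) b² + (t/2)(1−a). Define t* = ( h⁻¹((1+h(a))/2) − a/2 − b² ) / ( (1−a)/2 − b² ), where h⁻¹ : [0,1] → [0,1/2] is the inverse of the binary entropy function restricted to [0,1/2]. Then t* ∈ [0,1] and 1 + h(a) = 2 h( α(t*) + a/2 ). -/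
open scoped BigOperators

lemma binEnt_eq' (t : ℝ) : binEnt t = Real.binEntropy t / Real.log 2 := by
  simp [binEnt, Real.binEntropy, Real.logb, Real.log_inv]
  ring

lemma binEnt_mono' {x y : ℝ} (hx : x ∈ Set.Icc (0:ℝ) (1/2)) (hy : y ∈ Set.Icc (0:ℝ) (1/2))
    (h : x ≤ y) : binEnt x ≤ binEnt y := by
  rw [binEnt_eq', binEnt_eq', div_le_div_iff_of_pos_right (Real.log_pos (by norm_num))]
  have hx' : x ∈ Set.Icc (0:ℝ) 2⁻¹ := by rw [show (2:ℝ)⁻¹ = 1/2 by norm_num]; exact hx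
  have hy' : y ∈ Set.Icc (0:ℝ) 2⁻¹ := by rw [show (2:ℝ)⁻¹ = 1/2 by norm_num]; exact hy
  exact Real.binEntropy_strictMonoOn.monotoneOn hx' hy' h

lemma binEnt_le_one' (t : ℝ) : binEnt t ≤ 1 := by
  rw [binEnt_eq', div_le_one (Real.log_pos (by norm_num))]
  exact Real.binEntropy_le_log_two

/-- For `a ∈ (0,1/2)`, `b = (1−√(1−2a))/2`, `α(t) = (1−t)b² + (t/2)(1−a)`,
and `t* = (h⁻¹((1+h(a))/2) − a/2 − b²)/((1−a)/2 − b²)` (where `y = h⁻¹((1+h(a))/2)` is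
characterized by `y ∈ [0,1/2]` and `h(y) = (1+h(a))/2`), we have `t* ∈ [0,1]` and
`1 + h(a) = 2 h(α(t*) + a/2)`. -/
theorem stmt16 (a b y tstar : ℝ) (ha : a ∈ Set.Ioo (0 : ℝ) (1 / 2))
    (hb : b = (1 - Real.sqrt (1 - 2 * a)) / 2)
    (hy1 : y ∈ Set.Icc (0 : ℝ) (1 / 2)) (hy2 : binEnt y = (1 + binEnt a) / 2)
    (ht : tstar = (y - a / 2 - b ^ 2) / ((1 - a) / 2 - b ^ 2)) :
    tstar ∈ Set.Icc (0 : ℝ) 1 ∧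
      1 + binEnt a = 2 * binEnt ((1 - tstar) * b ^ 2 + (tstar / 2) * (1 - a) + a / 2) := by
  obtain ⟨ha0, ha2⟩ := ha
  set s := Real.sqrt (1 - 2 * a) with hsdef
  have hs0 : 0 < s := Real.sqrt_pos.2 (by linarith)
  have hss : s ^ 2 = 1 - 2 * a := Real.sq_sqrt (by linarith)
  have hs1 : s < 1 := by nlinarith
  have hb0 : 0 < b := by rw [hb]; linarith
  have hb12 : b < 1 / 2 := by rw [hb]; linarith
  have hbs : 1 - 2 * b = s := by rw [hb]; ring
  have hba : a = 2 * b * (1 - b) := by nlinarith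
  have hDa : (1 - a) / 2 - b ^ 2 = s / 2 := by nlinarith
  have hNb : a / 2 + b ^ 2 = b := by nlinarith
  -- y ≥ b
  have hb_mem : b ∈ Set.Icc (0:ℝ) (1/2) := ⟨hb0.le, hb12.le⟩
  have ha_mem : a ∈ Set.Icc (0:ℝ) (1/2) := ⟨ha0.le, ha2.le⟩
  have hbea : b ≤ a := by nlinarith
  have hhb_le : binEnt b ≤ binEnt a := binEnt_mono' hb_mem ha_mem hbea
  have hha1 : binEnt a ≤ 1 := binEnt_le_one' a
  have hby : binEnt b ≤ binEnt y := by rw [hy2]; linarith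
  have hyb : b ≤ y := by
    by_contra hlt
    push_neg at hlt
    have := binEnt_mono' hy1 hb_mem hlt.le
    have hne : binEnt y < binEnt b := by
      rw [binEnt_eq', binEnt_eq', div_lt_div_iff_of_pos_right (Real.log_pos (by norm_num))]
      have hy' : y ∈ Set.Icc (0:ℝ) 2⁻¹ := by rw [show (2:ℝ)⁻¹ = 1/2 by norm_num]; exact hy1
      have hb' : b ∈ Set.Icc (0:ℝ) 2⁻¹ := ⟨hb0.le, by norm_num; linarith⟩
      exact Real.binEntropy_strictMonoOn hy' hb' hlt
    linarith
  have htN : y - a / 2 - b ^ 2 = y - b := by linarith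
  have hts : tstar = (y - b) / (s / 2) := by rw [ht, htN, hDa]
  have hy12 : y ≤ 1 / 2 := hy1.2
  have hbs2 : b + s / 2 = 1 / 2 := by rw [hb]; ring
  constructor
  · constructor
    · rw [hts]; apply div_nonneg <;> linarith
    · rw [hts, div_le_one (by linarith)]; linarith
  · have harg : (1 - tstar) * b ^ 2 + tstar / 2 * (1 - a) + a / 2 = y := by
      have : (1 - tstar) * b ^ 2 + tstar / 2 * (1 - a) + a / 2
          = b ^ 2 + a / 2 + tstar * ((1 - a) / 2 - b ^ 2) := by ring
      rw [this, hDa, hts, div_mul_cancel₀ _ (by positivity : s / 2 ≠ 0)]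
      linarith
    rw [harg, hy2]; ring
end
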